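/- arXiv:1305.4027 — 8 statements merged into one kernel-verified Lean document; each statement's English description precedes it below -/
import Mathlib

section
/- Let d be the minimizer of s ↦ f(x) + ⟨∇_i f(x), s⟩ + (L_i/2)‖s‖² + h_i(x_i + s) over s ∈ ℝ^{n_i}, where f has block coordinate Lipschitz gradient with constant L_i and h is convex and block separable. Then the composite function F = f + h satisfies the descent inequality F(x + U_i d) ≤ F(x) − (L_i/2)‖d‖². -/
open scoped BigOperators RealInnerProductSpace
open Finset Filter

noncomputable section

/-- The ambient space `ℝ^n` with the Euclidean norm. -/
abbrev En (n : ℕ) := EuclideanSpace ℝ (Fin n)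

/-- Projection onto block `i` of the block decomposition of `ℝ^n` given by the
block-index map `blk : Fin n → Fin N`; it realizes `U_i U_iᵀ y`. -/
def blockProj {n N : ℕ} (blk : Fin n → Fin N) (i : Fin N) (y : En n) : En n :=
  WithLp.toLp 2 (fun j => if blk j = i then y j else 0)

/-- The squared block norm `‖x‖_L² = ∑ i, L i ‖x_i‖²`. -/
def blockNormSq {n N : ℕ} (blk : Fin n → Fin N) (L : Fin N → ℝ) (x : En n) : ℝ :=
  ∑ i, L i * ‖blockProj blk i x‖ ^ 2

/-- `blockProj` as a linear map. -/
def blockProjL {n N : ℕ} (blk : Fin n → Fin N) (i : Fin N) : En n →ₗ[ℝ] En n where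
  toFun := blockProj blk i
  map_add' u v := by
    ext j; simp only [blockProj, PiLp.add_apply, PiLp.toLp_apply]
    split <;> simp
  map_smul' c u := by
    ext j; simp only [blockProj, PiLp.smul_apply, PiLp.toLp_apply, RingHom.id_apply, smul_eq_mul]
    split <;> simp

/-- If `s` is supported on block `i`, the inner product only sees block `i` of `u`. -/
lemma inner_blockProj {n N : ℕ} (blk : Fin n → Fin N) (i : Fin N) (u s : En n)
    (hs : ∀ j, blk j ≠ i → s j = 0) : ⟪u, s⟫ = ⟪blockProj blk i u, s⟫ := by
  simp only [PiLp.inner_apply, RCLike.inner_apply, conj_trivial, blockProj]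
  refine Finset.sum_congr rfl fun j _ => ?_
  by_cases hj : blk j = i
  · simp [hj]
  · simp [hj, hs j hj]

lemma convexOn_finset_sum {ι E : Type*} [AddCommMonoid E] [Module ℝ E]
    (t : Finset ι) (f : ι → E → ℝ) (hf : ∀ k ∈ t, ConvexOn ℝ Set.univ (f k)) :
    ConvexOn ℝ Set.univ (fun y => ∑ k ∈ t, f k y) := by
  classical
  induction t using Finset.induction_on with
  | empty => simpa using convexOn_const (0:ℝ) convex_univ
  | insert _ _ hne ih =>
    simp only [Finset.sum_insert hne]
    exact (hf _ (Finset.mem_insert_self _ _)).add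
      (ih fun k hk => hf k (Finset.mem_insert_of_mem hk))


/-- Let `d` (supported on block `i`) minimize
`s ↦ f(x) + ⟨∇_i f(x), s⟩ + (L_i/2)‖s‖² + h_i(x_i + s)` over vectors supported on block `i`,
where `f` has block-coordinate Lipschitz gradient with constant `L_i > 0` on block `i` and
`h` is convex and block separable. Then `F = f + h` satisfies
`F(x + U_i d) ≤ F(x) − (L_i/2)‖d‖²`. -/
theorem stmt3 {n N : ℕ} (blk : Fin n → Fin N) (i : Fin N)
    (f h : En n → ℝ) (g : En n → En n) (hg : ∀ x, HasGradientAt f (g x) x)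
    (Li : ℝ) (hLi : 0 < Li)
    (hlip : ∀ (x s : En n), (∀ j, blk j ≠ i → s j = 0) →
      ‖blockProj blk i (g (x + s)) - blockProj blk i (g x)‖ ≤ Li * ‖s‖)
    (H : Fin N → En n → ℝ) (hHconv : ∀ k, ConvexOn ℝ Set.univ (H k))
    (hsep : ∀ x, h x = ∑ k, H k (blockProj blk k x)) (hcont : Continuous h)
    (x d : En n) (hdsupp : ∀ j, blk j ≠ i → d j = 0)
    (hdmin : ∀ s : En n, (∀ j, blk j ≠ i → s j = 0) →
      f x + ⟪g x, d⟫ + Li / 2 * ‖d‖ ^ 2 + h (x + d) ≤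
      f x + ⟪g x, s⟫ + Li / 2 * ‖s‖ ^ 2 + h (x + s)) :
    f (x + d) + h (x + d) ≤ (f x + h x) - Li / 2 * ‖d‖ ^ 2 := by
  -- derivative of the line restriction of f
  have hline : ∀ t : ℝ, HasDerivAt (fun t : ℝ => x + t • d) d t := by
    intro t
    simpa using ((hasDerivAt_id t).smul_const d).const_add x
  have hphi : ∀ t : ℝ, HasDerivAt (fun t : ℝ => f (x + t • d)) ⟪g (x + t • d), d⟫ t := by
    intro t
    have h1 := (hg (x + t • d)).hasFDerivAt
    have := h1.comp_hasDerivAt t (hline t)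
    simp [InnerProductSpace.toDual_apply_apply] at this
    exact this
  -- the auxiliary function ψ and its derivative
  set ψ : ℝ → ℝ := fun t => f (x + t • d) - t * ⟪g x, d⟫ - Li / 2 * t ^ 2 * ‖d‖ ^ 2 with hψdef
  have hψ' : ∀ t : ℝ, HasDerivAt ψ
      (⟪g (x + t • d), d⟫ - ⟪g x, d⟫ - Li * t * ‖d‖ ^ 2) t := by
    intro t
    have h2 : HasDerivAt (fun t : ℝ => t * ⟪g x, d⟫) ⟪g x, d⟫ t := by
      simpa using (hasDerivAt_id t).mul_const (⟪g x, d⟫)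
    have h3 : HasDerivAt (fun t : ℝ => Li / 2 * t ^ 2 * ‖d‖ ^ 2)
        (Li * t * ‖d‖ ^ 2) t := by
      have := ((hasDerivAt_pow 2 t).const_mul (Li / 2)).mul_const (‖d‖ ^ 2)
      rw [show Li * t * ‖d‖ ^ 2 = Li / 2 * (↑2 * t ^ (2 - 1)) * ‖d‖ ^ 2 by simp only [Nat.add_one_sub_one, pow_one, Nat.cast_ofNat]; ring]
      exact this
    exact ((hphi t).sub h2).sub h3
  -- ψ' ≤ 0 on (0,1)
  have hψ'nonpos : ∀ t ∈ Set.Ioo (0:ℝ) 1,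
      ⟪g (x + t • d), d⟫ - ⟪g x, d⟫ - Li * t * ‖d‖ ^ 2 ≤ 0 := by
    intro t ht
    have hsupp : ∀ j, blk j ≠ i → (t • d) j = 0 := by
      intro j hj; simp [hdsupp j hj]
    have hl := hlip x (t • d) hsupp
    have hinner : ⟪g (x + t • d), d⟫ - ⟪g x, d⟫ =
        ⟪blockProj blk i (g (x + t • d)) - blockProj blk i (g x), d⟫ := by
      rw [inner_sub_left, ← inner_blockProj blk i (g (x + t • d)) d hdsupp,
        ← inner_blockProj blk i (g x) d hdsupp]
    have hcs : ⟪blockProj blk i (g (x + t • d)) - blockProj blk i (g x), d⟫ ≤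
        ‖blockProj blk i (g (x + t • d)) - blockProj blk i (g x)‖ * ‖d‖ :=
      real_inner_le_norm _ _
    have hnorm : ‖t • d‖ = t * ‖d‖ := by
      rw [norm_smul, Real.norm_eq_abs, abs_of_pos ht.1]
    have : ⟪g (x + t • d), d⟫ - ⟪g x, d⟫ ≤ Li * t * ‖d‖ ^ 2 := by
      rw [hinner]
      calc _ ≤ ‖blockProj blk i (g (x + t • d)) - blockProj blk i (g x)‖ * ‖d‖ := hcs
        _ ≤ Li * ‖t • d‖ * ‖d‖ := by
            apply mul_le_mul_of_nonneg_right hl (norm_nonneg _)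
        _ = Li * t * ‖d‖ ^ 2 := by rw [hnorm]; ring
    linarith
  -- descent lemma: ψ 1 ≤ ψ 0
  have hanti : AntitoneOn ψ (Set.Icc 0 1) := by
    apply antitoneOn_of_hasDerivWithinAt_nonpos (convex_Icc 0 1)
      (fun t _ => ((hψ' t).continuousAt).continuousWithinAt)
      (fun t _ => ((hψ' t).hasDerivWithinAt))
    intro t ht
    rw [interior_Icc] at ht
    exact hψ'nonpos t ht
  have hdescent : f (x + d) ≤ f x + ⟪g x, d⟫ + Li / 2 * ‖d‖ ^ 2 := by
    have := hanti (Set.mem_Icc.mpr ⟨le_refl 0, zero_le_one⟩)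
      (Set.mem_Icc.mpr ⟨zero_le_one, le_refl 1⟩) zero_le_one
    simp only [hψdef, zero_smul, add_zero, one_smul, one_pow, mul_one, one_mul,
      zero_pow, mul_zero, zero_mul, sub_zero] at this
    linarith
  -- convexity of h
  have hconv : ConvexOn ℝ Set.univ h := by
    have heq : h = fun y => ∑ k, H k (blockProjL blk k y) := by
      funext y; exact hsep y
    rw [heq]
    exact convexOn_finset_sum _ _ fun k _ => by
      exact (hHconv k).comp_linearMap (blockProjL blk k)
  -- strong-convexity consequence of minimality, for t ∈ (0,1)
  have hkey : ∀ t ∈ Set.Ioo (0:ℝ) 1,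
      ⟪g x, d⟫ + h (x + d) + Li / 2 * (1 + t) * ‖d‖ ^ 2 ≤ h x := by
    intro t ht
    obtain ⟨ht0, ht1⟩ := ht
    have hsupp : ∀ j, blk j ≠ i → (t • d) j = 0 := by
      intro j hj; simp [hdsupp j hj]
    have hmin := hdmin (t • d) hsupp
    have hcomb : x + t • d = t • (x + d) + (1 - t) • x := by
      module
    have hconvineq : h (x + t • d) ≤ t * h (x + d) + (1 - t) * h x := by
      rw [hcomb]
      have := hconv.2 (Set.mem_univ (x + d)) (Set.mem_univ x)
        (le_of_lt ht0) (by linarith : (0:ℝ) ≤ 1 - t) (by ring)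
      simpa [smul_eq_mul] using this
    have hinner : ⟪g x, t • d⟫ = t * ⟪g x, d⟫ := real_inner_smul_right _ _ _
    have hnormsq : ‖t • d‖ ^ 2 = t ^ 2 * ‖d‖ ^ 2 := by
      rw [norm_smul, Real.norm_eq_abs, mul_pow, sq_abs]
    rw [hinner, hnormsq] at hmin
    have h1t : 0 < 1 - t := by linarith
    have h2 : (1 - t) * (⟪g x, d⟫ + h (x + d) + Li / 2 * (1 + t) * ‖d‖ ^ 2) ≤
        (1 - t) * h x := by nlinarith [hmin, hconvineq]
    exact (mul_le_mul_iff_right₀ h1t).mp h2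
  -- pass to the limit t → 1⁻
  have hkey1 : ⟪g x, d⟫ + h (x + d) + Li / 2 * 2 * ‖d‖ ^ 2 ≤ h x := by
    have htend : Tendsto (fun t : ℝ => ⟪g x, d⟫ + h (x + d) + Li / 2 * (1 + t) * ‖d‖ ^ 2)
        (nhdsWithin 1 (Set.Iio 1)) (nhds (⟪g x, d⟫ + h (x + d) + Li / 2 * (1 + 1) * ‖d‖ ^ 2)) := by
      apply Tendsto.mono_left _ nhdsWithin_le_nhds
      have hc : Continuous fun t : ℝ =>
          ⟪g x, d⟫ + h (x + d) + Li / 2 * (1 + t) * ‖d‖ ^ 2 := by fun_prop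
      exact hc.tendsto 1
    have hev : ∀ᶠ t in nhdsWithin (1:ℝ) (Set.Iio 1),
        ⟪g x, d⟫ + h (x + d) + Li / 2 * (1 + t) * ‖d‖ ^ 2 ≤ h x := by
      filter_upwards [Ioo_mem_nhdsLT_of_mem (Set.mem_Ioc.mpr ⟨zero_lt_one, le_refl 1⟩)]
        with t ht using hkey t ht
    have := le_of_tendsto htend hev
    linarith
  have hxd : x + (1:ℝ) • d = x + d := by simp
  linarith [hdescent]
end
end

section
/- (Robbins–Siegmund supermartingale convergence) Let v_k, u_k, α_k be sequences of nonnegative random variables such that E[v_{k+1} | F_k] ≤ (1 + α_k) v_k − u_k for all k ≥ 0 almost surely, where F_k is the σ-algebra generated by v_0,…,v_k, u_0,…,u_k, α_0,…,α_k, and Σ_k α_k < ∞ almost surely. Then v_k converges almost surely to a nonnegative random variable v, and Σ_k u_k < ∞ almost surely. -/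
open scoped BigOperators
open MeasureTheory Filter

noncomputable section

/-- **Robbins–Siegmund supermartingale convergence.**
Let `v k`, `u k`, `α k` be sequences of nonnegative random variables adapted to a
filtration `ℱ` (e.g. the one generated by `v_0,…,v_k, u_0,…,u_k, α_0,…,α_k`) such that
`E[v_{k+1} | ℱ_k] ≤ (1 + α_k) v_k − u_k` almost surely for all `k`, and
`∑ k, α k < ∞` almost surely. Then `v_k` converges almost surely to a nonnegative
random variable `V`, and `∑ k, u k < ∞` almost surely. -/
theorem stmt4 {Ω : Type*} {m0 : MeasurableSpace Ω} (μ : Measure Ω) [IsProbabilityMeasure μ]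
    (ℱ : MeasureTheory.Filtration ℕ m0)
    (v u α : ℕ → Ω → ℝ)
    (hv_nonneg : ∀ k ω, 0 ≤ v k ω) (hu_nonneg : ∀ k ω, 0 ≤ u k ω)
    (hα_nonneg : ∀ k ω, 0 ≤ α k ω)
    (hv_adapted : MeasureTheory.Adapted ℱ v)
    (hu_adapted : MeasureTheory.Adapted ℱ u)
    (hα_adapted : MeasureTheory.Adapted ℱ α)
    (hv_int : ∀ k, Integrable (v k) μ)
    (hu_int : ∀ k, Integrable (u k) μ)
    (hα_int : ∀ k, Integrable (α k) μ)
    (hcond : ∀ k, μ[v (k + 1) | ℱ k] ≤ᵐ[μ] fun ω => (1 + α k ω) * v k ω - u k ω)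
    (hα_sum : ∀ᵐ ω ∂μ, Summable fun k => α k ω) :
    ∃ V : Ω → ℝ, (∀ ω, 0 ≤ V ω) ∧
      (∀ᵐ ω ∂μ, Tendsto (fun k => v k ω) atTop (nhds (V ω))) ∧
      (∀ᵐ ω ∂μ, Summable fun k => u k ω) := by
  classical
  -- the compensating product
  set P : ℕ → Ω → ℝ := fun k ω => ∏ j ∈ Finset.range k, (1 + α j ω) with hPdef
  have hP_pos : ∀ k ω, 0 < P k ω := fun k ω => by
    simp only [hPdef]
    exact Finset.prod_pos fun j _ => by linarith [hα_nonneg j ω]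
  have hP_one_le : ∀ k ω, 1 ≤ P k ω := fun k ω => by
    simp only [hPdef]
    calc (1:ℝ) = ∏ j ∈ Finset.range k, (1:ℝ) := by simp
      _ ≤ ∏ j ∈ Finset.range k, (1 + α j ω) :=
          Finset.prod_le_prod (fun j _ => zero_le_one) fun j _ => by linarith [hα_nonneg j ω]
  have hP_succ : ∀ k ω, P (k + 1) ω = P k ω * (1 + α k ω) := fun k ω => by
    simp only [hPdef]
    exact Finset.prod_range_succ _ _
  have hP_mono : ∀ ω, Monotone fun k => P k ω := fun ω =>
    monotone_nat_of_le_succ fun k => by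
      have h := hP_succ k ω
      nlinarith [hP_pos k ω, hα_nonneg k ω]
  -- measurability of the product
  have hPm : ∀ n k, k ≤ n + 1 → StronglyMeasurable[ℱ n] (P k) := by
    intro n k hk
    simp only [hPdef]
    apply Finset.stronglyMeasurable_fun_prod
    intro j hj
    have hj' : j ≤ n := by
      have := Finset.mem_range.mp hj
      omega
    exact stronglyMeasurable_const.add (((hα_adapted j).mono (ℱ.mono hj') le_rfl).stronglyMeasurable)
  have smdiv : ∀ {m : MeasurableSpace Ω} {f g : Ω → ℝ}, StronglyMeasurable[m] f →
      StronglyMeasurable[m] g → StronglyMeasurable[m] (fun ω => f ω / g ω) := by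
    intro m f g hf hg
    rw [stronglyMeasurable_iff_measurable] at *
    exact hf.div hg
  have hPm0 : ∀ k, StronglyMeasurable (P k) := fun k =>
    ((hPm k k (Nat.le_succ k)).mono (ℱ.le k))
  have hvm0 : ∀ k, StronglyMeasurable (v k) := fun k => ((hv_adapted k).mono (ℱ.le k) le_rfl).stronglyMeasurable
  have hum0 : ∀ k, StronglyMeasurable (u k) := fun k => ((hu_adapted k).mono (ℱ.le k) le_rfl).stronglyMeasurable
  -- the partial sums and the compensated process
  set S : ℕ → Ω → ℝ := fun k ω => ∑ j ∈ Finset.range k, u j ω / P (j + 1) ω with hSdef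
  set W : ℕ → Ω → ℝ := fun k ω => v k ω / P k ω + S k ω with hWdef
  have hS_succ : ∀ k ω, S (k + 1) ω = S k ω + u k ω / P (k + 1) ω := fun k ω => by
    simp only [hSdef]
    exact Finset.sum_range_succ _ _
  have hdiv_le : ∀ (f : Ω → ℝ) (_ : ∀ ω, 0 ≤ f ω) (k : ℕ) (ω : Ω),
      f ω / P k ω ≤ f ω := by
    intro f hf k ω
    rw [div_le_iff₀ (hP_pos k ω)]
    nlinarith [hP_one_le k ω, hf ω]
  have hdiv_nonneg : ∀ (f : Ω → ℝ) (_ : ∀ ω, 0 ≤ f ω) (k : ℕ) (ω : Ω),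
      0 ≤ f ω / P k ω := fun f hf k ω => div_nonneg (hf ω) (hP_pos k ω).le
  -- integrability
  have hvP_int : ∀ k, Integrable (fun ω => v k ω / P k ω) μ := by
    intro k
    refine (hv_int k).mono' (smdiv (hvm0 k) (hPm0 k)).aestronglyMeasurable ?_
    refine Eventually.of_forall fun ω => ?_
    rw [Real.norm_eq_abs, abs_of_nonneg (hdiv_nonneg _ (fun ω => hv_nonneg k ω) k ω)]
    exact hdiv_le _ (fun ω => hv_nonneg k ω) k ω
  have huP_int : ∀ j, Integrable (fun ω => u j ω / P (j + 1) ω) μ := by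
    intro j
    refine (hu_int j).mono' (smdiv (hum0 j) (hPm0 (j + 1))).aestronglyMeasurable ?_
    refine Eventually.of_forall fun ω => ?_
    rw [Real.norm_eq_abs, abs_of_nonneg (hdiv_nonneg _ (fun ω => hu_nonneg j ω) (j + 1) ω)]
    exact hdiv_le _ (fun ω => hu_nonneg j ω) (j + 1) ω
  have hS_int : ∀ k, Integrable (S k) μ := by
    intro k
    exact integrable_finset_sum _ fun j _ => huP_int j
  have hW_int : ∀ k, Integrable (W k) μ := fun k => (hvP_int k).add (hS_int k)
  -- adaptedness
  have hSm : ∀ n k, k ≤ n + 1 → StronglyMeasurable[ℱ n] (S k) := by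
    intro n k hk
    simp only [hSdef]
    apply Finset.stronglyMeasurable_fun_sum
    intro j hj
    have hj' : j < k := Finset.mem_range.mp hj
    exact smdiv (((hu_adapted j).mono (ℱ.mono (by omega)) le_rfl).stronglyMeasurable) (hPm n (j + 1) (by omega))
  have hW_adapted : StronglyAdapted ℱ W := by
    intro k
    exact (smdiv ((hv_adapted k).stronglyMeasurable) (hPm k k (Nat.le_succ k))).add (hSm k k (Nat.le_succ k))
  -- the supermartingale property
  have hW_super : Supermartingale W ℱ μ := by
    refine supermartingale_nat hW_adapted hW_int fun k => ?_
    have hinv : StronglyMeasurable[ℱ k] (fun ω => (P (k + 1) ω)⁻¹) := by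
      rw [stronglyMeasurable_iff_measurable] at *
      exact (hPm k (k + 1) le_rfl).measurable.inv
    have hWsplit : W (k + 1) = (fun ω => (P (k + 1) ω)⁻¹ * v (k + 1) ω) + S (k + 1) := by
      funext ω
      simp only [hWdef, Pi.add_apply]
      rw [div_eq_inv_mul]
    have hmul_int : Integrable ((fun ω => (P (k + 1) ω)⁻¹) * v (k + 1)) μ := by
      have : ((fun ω => (P (k + 1) ω)⁻¹) * v (k + 1)) =
          fun ω => v (k + 1) ω / P (k + 1) ω := by
        funext ω; simp [mul_comm, div_eq_inv_mul]
      rw [this]; exact hvP_int (k + 1)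
    have h1 : μ[W (k + 1)|ℱ k] =ᵐ[μ]
        (fun ω => (P (k + 1) ω)⁻¹ * (μ[v (k + 1)|ℱ k]) ω) + S (k + 1) := by
      rw [hWsplit]
      refine (condExp_add hmul_int ((hS_int (k + 1))) (ℱ k)).trans ?_
      have h2 := condExp_mul_of_stronglyMeasurable_left hinv hmul_int (hv_int (k + 1))
      have h3' : μ[S (k + 1)|ℱ k] = S (k + 1) :=
        condExp_of_stronglyMeasurable (ℱ.le k) (hSm k (k + 1) le_rfl) (hS_int (k + 1))
      rw [h3']
      exact EventuallyEq.add h2 EventuallyEq.rfl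
    refine h1.trans_le ?_
    filter_upwards [hcond k] with ω hω
    simp only [Pi.add_apply]
    have hPk := hP_pos k ω
    have hPk1 := hP_pos (k + 1) ω
    have ha : (0:ℝ) < 1 + α k ω := by linarith [hα_nonneg k ω]
    have key : (P (k + 1) ω)⁻¹ * ((1 + α k ω) * v k ω - u k ω) =
        v k ω / P k ω - u k ω / P (k + 1) ω := by
      rw [hP_succ k ω]
      field_simp
    have hle : (P (k + 1) ω)⁻¹ * (μ[v (k + 1)|ℱ k]) ω ≤
        v k ω / P k ω - u k ω / P (k + 1) ω := by
      rw [← key]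
      exact mul_le_mul_of_nonneg_left hω (inv_nonneg.mpr hPk1.le)
    have hSs := hS_succ k ω
    simp only [hWdef]
    have hx : S (k + 1) ω = S k ω + u k ω / P (k + 1) ω := hSs
    calc (P (k + 1) ω)⁻¹ * (μ[v (k + 1)|ℱ k]) ω + S (k + 1) ω
        ≤ (v k ω / P k ω - u k ω / P (k + 1) ω) + (S k ω + u k ω / P (k + 1) ω) := by
          rw [hx]; linarith
      _ = v k ω / P k ω + S k ω := by ring
  -- L¹ boundedness and a.s. convergence of W
  have hW_nonneg : ∀ k ω, 0 ≤ W k ω := by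
    intro k ω
    have h1 := hdiv_nonneg _ (fun ω => hv_nonneg k ω) k ω
    have h2 : 0 ≤ S k ω :=
      Finset.sum_nonneg fun j _ => hdiv_nonneg _ (fun ω => hu_nonneg j ω) (j + 1) ω
    simp only [hWdef]; linarith
  have hW_int_le : ∀ n, ∫ ω, W n ω ∂μ ≤ ∫ ω, W 0 ω ∂μ := by
    intro n
    have h := hW_super.2.1 0 n (Nat.zero_le n)
    have h2 : ∫ ω, (μ[W n|ℱ 0]) ω ∂μ ≤ ∫ ω, W 0 ω ∂μ :=
      integral_mono_ae integrable_condExp (hW_int 0) h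
    rwa [integral_condExp (ℱ.le 0)] at h2
  have hW_bdd : ∀ n, eLpNorm (W n) 1 μ ≤ ENNReal.ofReal (∫ ω, W 0 ω ∂μ) := by
    intro n
    rw [eLpNorm_one_eq_lintegral_enorm,
      ← ofReal_integral_norm_eq_lintegral_enorm (hW_int n)]
    apply ENNReal.ofReal_le_ofReal
    calc ∫ ω, ‖W n ω‖ ∂μ = ∫ ω, W n ω ∂μ := by
          refine integral_congr_ae (Eventually.of_forall fun ω => ?_)
          simp only [Real.norm_eq_abs]
          exact abs_of_nonneg (hW_nonneg n ω)
      _ ≤ ∫ ω, W 0 ω ∂μ := hW_int_le n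
  have hW_conv : ∀ᵐ ω ∂μ, ∃ c, Tendsto (fun n => W n ω) atTop (nhds c) := by
    have hsub : Submartingale (-W) ℱ μ := hW_super.neg
    have hbdd : ∀ n, eLpNorm ((-W) n) 1 μ ≤ (∫ ω, W 0 ω ∂μ).toNNReal := by
      intro n
      have heq : eLpNorm ((-W) n) 1 μ = eLpNorm (W n) 1 μ := by
        simp [eLpNorm_neg]
      rw [heq]
      exact hW_bdd n
    have h := hsub.exists_ae_tendsto_of_bdd hbdd
    filter_upwards [h] with ω hω
    obtain ⟨c, hc⟩ := hω
    exact ⟨-c, by simpa using hc.neg⟩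
  -- pointwise analysis on the a.s. good set
  set V : Ω → ℝ := fun ω => max 0 (limUnder atTop fun k => v k ω) with hVdef
  have hV_nonneg : ∀ ω, 0 ≤ V ω := fun ω => le_max_left _ _
  have hmain : ∀ᵐ ω ∂μ, Tendsto (fun k => v k ω) atTop (nhds (V ω)) ∧
      Summable fun k => u k ω := by
    filter_upwards [hW_conv, hα_sum] with ω hWc hαs
    obtain ⟨c, hc⟩ := hWc
    -- P is bounded
    have hPbd : ∀ n, P n ω ≤ Real.exp (∑' j, α j ω) := by
      intro n
      have h1 : P n ω ≤ Real.exp (∑ j ∈ Finset.range n, α j ω) := by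
        rw [Real.exp_sum]
        refine Finset.prod_le_prod (fun j _ => by linarith [hα_nonneg j ω]) fun j _ => ?_
        have := Real.add_one_le_exp (α j ω)
        linarith
      refine h1.trans (Real.exp_le_exp.mpr ?_)
      exact Summable.sum_le_tsum _ (fun j _ => hα_nonneg j ω) hαs
    have hPtend : Tendsto (fun n => P n ω) atTop (nhds (⨆ n, P n ω)) :=
      tendsto_atTop_ciSup (hP_mono ω) ⟨Real.exp (∑' j, α j ω), by
        rintro x ⟨n, rfl⟩; exact hPbd n⟩
    -- W is bounded above
    obtain ⟨M, hM⟩ := hc.bddAbove_range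
    have hMle : ∀ n, W n ω ≤ M := fun n => hM ⟨n, rfl⟩
    -- S is monotone and bounded, hence converges
    have hS_nonneg : ∀ j, 0 ≤ u j ω / P (j + 1) ω := fun j =>
      hdiv_nonneg _ (fun ω => hu_nonneg j ω) (j + 1) ω
    have hS_le_W : ∀ n, S n ω ≤ W n ω := by
      intro n
      have := hdiv_nonneg _ (fun ω => hv_nonneg n ω) n ω
      simp only [hWdef]; linarith
    have hSsum : Summable fun j => u j ω / P (j + 1) ω :=
      summable_of_sum_range_le hS_nonneg fun n => (hS_le_W n).trans (hMle n)
    have hStend : Tendsto (fun n => S n ω) atTop (nhds (∑' j, u j ω / P (j + 1) ω)) :=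
      hSsum.hasSum.tendsto_sum_nat
    -- hence v/P converges
    have hvPtend : Tendsto (fun n => v n ω / P n ω) atTop
        (nhds (c - ∑' j, u j ω / P (j + 1) ω)) := by
      have : (fun n => v n ω / P n ω) = fun n => W n ω - S n ω := by
        funext n; simp only [hWdef]; ring
      rw [this]
      exact hc.sub hStend
    -- hence v converges
    have hvtend : Tendsto (fun n => v n ω) atTop
        (nhds ((c - ∑' j, u j ω / P (j + 1) ω) * (⨆ n, P n ω))) := by
      have heq : (fun n => v n ω) = fun n => (v n ω / P n ω) * P n ω := by
        funext n
        rw [div_mul_cancel₀ _ (hP_pos n ω).ne']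
      rw [heq]
      exact hvPtend.mul hPtend
    constructor
    · have hL : 0 ≤ (c - ∑' j, u j ω / P (j + 1) ω) * (⨆ n, P n ω) :=
        ge_of_tendsto' hvtend (fun n => hv_nonneg n ω)
      have hlim : limUnder atTop (fun k => v k ω) =
          (c - ∑' j, u j ω / P (j + 1) ω) * (⨆ n, P n ω) := hvtend.limUnder_eq
      have : V ω = (c - ∑' j, u j ω / P (j + 1) ω) * (⨆ n, P n ω) := by
        rw [hVdef]; simp only []; rw [hlim, max_eq_right hL]
      rw [this]; exact hvtend
    · -- summability of u
      refine Summable.of_nonneg_of_le (fun j => hu_nonneg j ω) (fun j => ?_)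
        (hSsum.mul_left (Real.exp (∑' j, α j ω)))
      have h1 : u j ω = (u j ω / P (j + 1) ω) * P (j + 1) ω :=
        (div_mul_cancel₀ _ (hP_pos (j + 1) ω).ne').symm
      calc u j ω = (u j ω / P (j + 1) ω) * P (j + 1) ω := h1
        _ ≤ (u j ω / P (j + 1) ω) * Real.exp (∑' i, α i ω) :=
            mul_le_mul_of_nonneg_left (hPbd (j + 1)) (hS_nonneg j)
        _ = Real.exp (∑' i, α i ω) * (u j ω / P (j + 1) ω) := mul_comm _ _
  exact ⟨V, hV_nonneg, hmain.mono fun ω h => h.1, hmain.mono fun ω h => h.2⟩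
end
end

section
/- For the 1-random coordinate descent method with uniform block selection applied to F = f + h under the block Lipschitz and convex-separable assumptions, the expected optimality measure satisfies min_{0 ≤ l ≤ k} E[(M_1(x^l, L))²] ≤ 2N (F(x⁰) − F*) / (k + 1) for all k ≥ 0, where M_1(x, L) = ‖d_L(x)‖_L and F* = inf F. -/
open scoped BigOperators RealInnerProductSpace
open Finset Filter

noncomputable section

variable {n N : ℕ} {blk : Fin n → Fin N}

lemma bp_apply (i : Fin N) (y : En n) (j : Fin n) :
    blockProj blk i y j = if blk j = i then y j else 0 := rfl

lemma bp_add (i : Fin N) (x y : En n) :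
    blockProj blk i (x + y) = blockProj blk i x + blockProj blk i y := by
  ext j
  simp only [bp_apply, PiLp.add_apply]
  split <;> simp

lemma bp_smul (i : Fin N) (t : ℝ) (x : En n) :
    blockProj blk i (t • x) = t • blockProj blk i x := by
  ext j
  simp only [bp_apply, PiLp.smul_apply, smul_eq_mul]
  split <;> simp

lemma bp_of_supp {i : Fin N} {s : En n} (hs : ∀ j, blk j ≠ i → s j = 0) :
    blockProj blk i s = s := by
  ext j
  simp only [bp_apply]
  split_ifs with hj
  · rfl
  · exact (hs j hj).symm

lemma bp_of_supp_ne {i i' : Fin N} {s : En n} (hs : ∀ j, blk j ≠ i → s j = 0)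
    (hne : i' ≠ i) : blockProj blk i' s = 0 := by
  ext j
  simp only [bp_apply]
  split_ifs with hj
  · exact (hs j (hj ▸ hne)).trans rfl
  · rfl

lemma bp_supp (i : Fin N) (y : En n) : ∀ j, blk j ≠ i → blockProj blk i y j = 0 := by
  intro j hj; simp [bp_apply, hj]

lemma inner_eq_sum (y s : En n) : ⟪y, s⟫ = ∑ j, y j * s j := by
  simp [PiLp.inner_apply, RCLike.inner_apply, mul_comm]

lemma inner_bp_of_supp {i : Fin N} (y : En n) {s : En n}
    (hs : ∀ j, blk j ≠ i → s j = 0) : ⟪y, s⟫ = ⟪blockProj blk i y, s⟫ := by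
  rw [inner_eq_sum, inner_eq_sum]
  refine Finset.sum_congr rfl fun j _ => ?_
  by_cases hj : blk j = i
  · simp [bp_apply, hj]
  · simp [bp_apply, hj, hs j hj]

lemma inner_sum_bp (y u : En n) : ⟪y, u⟫ = ∑ i, ⟪y, blockProj blk i u⟫ := by
  simp only [inner_eq_sum]
  rw [Finset.sum_comm]
  refine Finset.sum_congr rfl fun j _ => ?_
  simp only [bp_apply, mul_ite, mul_zero]
  rw [Finset.sum_ite_eq Finset.univ (blk j) (fun _ => y j * u j)]
  simp

lemma bnsq_nonneg (L : Fin N → ℝ) (hL : ∀ i, 0 < L i) (x : En n) :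
    0 ≤ blockNormSq blk L x :=
  Finset.sum_nonneg fun i _ => mul_nonneg (hL i).le (sq_nonneg _)

lemma bnsq_smul (L : Fin N → ℝ) (t : ℝ) (x : En n) :
    blockNormSq blk L (t • x) = t ^ 2 * blockNormSq blk L x := by
  simp only [blockNormSq, bp_smul, norm_smul, mul_pow, Finset.mul_sum]
  refine Finset.sum_congr rfl fun i _ => ?_
  rw [Real.norm_eq_abs, sq_abs]; ring

lemma bnsq_of_supp {i : Fin N} (L : Fin N → ℝ) {s : En n}
    (hs : ∀ j, blk j ≠ i → s j = 0) :
    blockNormSq blk L s = L i * ‖s‖ ^ 2 := by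
  rw [blockNormSq, Finset.sum_eq_single i]
  · rw [bp_of_supp hs]
  · intro i' _ hne
    rw [bp_of_supp_ne hs hne]
    simp
  · simp

-- `∑ i, h (x + blockProj i u) = h (x + u) + (N - 1) * h x`
lemma sum_h_bp (H : Fin N → En n → ℝ) (h : En n → ℝ)
    (hsep : ∀ x, h x = ∑ k, H k (blockProj blk k x)) (x u : En n) :
    ∑ i, h (x + blockProj blk i u) = h (x + u) + ((N : ℝ) - 1) * h x := by
  have key : ∀ i, h (x + blockProj blk i u)
      = h x + (H i (blockProj blk i (x + u)) - H i (blockProj blk i x)) := by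
    intro i
    rw [hsep, hsep]
    have hterm : ∀ j : Fin N, H j (blockProj blk j (x + blockProj blk i u))
        = H j (blockProj blk j x) + (if j = i then
            H j (blockProj blk j (x+u)) - H j (blockProj blk j x) else 0) := by
      intro j
      by_cases hj : j = i
      · rw [hj, if_pos rfl, bp_add, bp_of_supp (bp_supp i u), ← bp_add]
        ring
      · rw [if_neg hj, bp_add, bp_of_supp_ne (bp_supp i u) hj, add_zero, add_zero]
    rw [Finset.sum_congr rfl fun j _ => hterm j, Finset.sum_add_distrib,
      Finset.sum_ite_eq' Finset.univ i, if_pos (Finset.mem_univ i)]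
  rw [Finset.sum_congr rfl fun i _ => key i, Finset.sum_add_distrib,
    Finset.sum_const, Finset.card_univ, Fintype.card_fin, Finset.sum_sub_distrib,
    ← hsep, ← hsep]
  push_cast
  ring

lemma h_convex (H : Fin N → En n → ℝ) (hHconv : ∀ k, ConvexOn ℝ Set.univ (H k))
    (h : En n → ℝ) (hsep : ∀ x, h x = ∑ k, H k (blockProj blk k x)) :
    ConvexOn ℝ Set.univ h := by
  refine ⟨convex_univ, fun x _ y _ a b ha hb hab => ?_⟩
  rw [smul_eq_mul, smul_eq_mul, hsep, hsep, hsep, Finset.mul_sum, Finset.mul_sum, ← Finset.sum_add_distrib]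
  refine Finset.sum_le_sum fun i _ => ?_
  have := (hHconv i).2 (Set.mem_univ (blockProj blk i x)) (Set.mem_univ (blockProj blk i y)) ha hb hab
  rw [bp_add, bp_smul, bp_smul]
  simpa using this

lemma prox_key {h : En n → ℝ} (hconv : ConvexOn ℝ Set.univ h)
    (L : Fin N → ℝ) (hL : ∀ i, 0 < L i) (x u v : En n)
    (hmin : ∀ s : En n, ⟪v, u⟫ + (1/2 : ℝ) * blockNormSq blk L u + h (x + u) ≤
      ⟪v, s⟫ + (1/2 : ℝ) * blockNormSq blk L s + h (x + s)) :
    ⟪v, u⟫ + h (x + u) - h x ≤ - blockNormSq blk L u := by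
  set B := blockNormSq blk L u with hB
  set A := ⟪v, u⟫ + h (x + u) - h x with hA
  have hB0 : 0 ≤ B := bnsq_nonneg L hL u
  have main : ∀ t : ℝ, 0 ≤ t → t < 1 → A ≤ -((1 + t)/2) * B := by
    intro t ht0 ht1
    have h1 := hmin (t • u)
    rw [bnsq_smul, real_inner_smul_right] at h1
    have hconvpt : h (x + t • u) ≤ (1 - t) * h x + t * h (x + u) := by
      have hc := hconv.2 (Set.mem_univ x) (Set.mem_univ (x + u))
        (by linarith : (0:ℝ) ≤ 1 - t) ht0 (by ring)
      have e : (1 - t) • x + t • (x + u) = x + t • u := by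
        rw [smul_add, sub_smul, one_smul]
        abel
      rw [e] at hc
      simpa using hc
    have h2 : (1 - t) * A ≤ (1 - t) * (-((1 + t)/2) * B) := by nlinarith
    exact le_of_mul_le_mul_left h2 (by linarith)
  refine le_of_forall_pos_le_add fun ε hε => ?_
  rcases eq_or_lt_of_le hB0 with hB0' | hB0'
  · have := main 0 le_rfl one_pos
    rw [← hB0'] at this ⊢
    linarith
  · set t : ℝ := max 0 (1 - ε / B) with ht
    have ht0 : 0 ≤ t := le_max_left _ _
    have ht1 : t < 1 := by
      rw [ht, max_lt_iff]
      constructor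
      · norm_num
      · have : 0 < ε / B := div_pos hε hB0'
        linarith
    have h3 := main t ht0 ht1
    have h4 : 1 - ε / B ≤ t := le_max_right _ _
    have h5 : (1 - t) * B ≤ ε := by
      rcases le_or_gt (ε / B) 1 with hc | hc
      · have : 1 - t ≤ ε / B := by linarith
        calc (1 - t) * B ≤ ε / B * B := by nlinarith
        _ = ε := by field_simp
      · nlinarith [mul_nonneg ht0 hB0, (one_lt_div hB0').mp hc]
    nlinarith [h3, h5, mul_nonneg (by linarith : (0:ℝ) ≤ 1 - t) hB0]

lemma descent (f : En n → ℝ) (g : En n → En n) (hg : ∀ x, HasGradientAt f (g x) x)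
    (L : Fin N → ℝ)
    (hlip : ∀ (i : Fin N) (x s : En n), (∀ j, blk j ≠ i → s j = 0) →
      ‖blockProj blk i (g (x + s)) - blockProj blk i (g x)‖ ≤ L i * ‖s‖)
    (i : Fin N) (x s : En n) (hs : ∀ j, blk j ≠ i → s j = 0) :
    f (x + s) ≤ f x + ⟪g x, s⟫ + L i / 2 * ‖s‖ ^ 2 := by
  set φ : ℝ → ℝ := fun t => f (x + t • s) - t * ⟪g x, s⟫ - L i / 2 * t ^ 2 * ‖s‖ ^ 2
    with hφ
  have hline : ∀ t : ℝ, HasDerivAt (fun t : ℝ => x + t • s) s t := by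
    intro t
    simpa using ((hasDerivAt_id t).smul_const s).const_add x
  have hcomp : ∀ t : ℝ, HasDerivAt (fun t : ℝ => f (x + t • s)) ⟪g (x + t • s), s⟫ t := by
    intro t
    have := ((hg (x + t • s)).hasFDerivAt).comp_hasDerivAt t (hline t)
    simpa [InnerProductSpace.toDual_apply_apply, Function.comp_def] using this
  have hderiv : ∀ t : ℝ,
      HasDerivAt φ (⟪g (x + t • s), s⟫ - ⟪g x, s⟫ - L i * t * ‖s‖ ^ 2) t := by
    intro t
    have p1 : HasDerivAt (fun t : ℝ => t * ⟪g x, s⟫) ⟪g x, s⟫ t := by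
      simpa using (hasDerivAt_id t).mul_const (⟪g x, s⟫)
    have p2 : HasDerivAt (fun t : ℝ => L i / 2 * t ^ 2 * ‖s‖ ^ 2)
        (L i * t * ‖s‖ ^ 2) t := by
      have hp : HasDerivAt (fun t : ℝ => t ^ 2) (2 * t) t := by
        simpa using hasDerivAt_pow 2 t
      have := (hp.const_mul (L i / 2)).mul_const (‖s‖ ^ 2)
      refine this.congr_deriv ?_
      ring
    exact ((hcomp t).sub p1).sub p2
  have hd : Differentiable ℝ φ := fun t => (hderiv t).differentiableAt
  have hanti : AntitoneOn φ (Set.Icc 0 1) := by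
    refine antitoneOn_of_deriv_nonpos (convex_Icc 0 1) hd.continuous.continuousOn
      (hd.differentiableOn) ?_
    intro t ht
    rw [interior_Icc] at ht
    rw [(hderiv t).deriv]
    have hsupp : ∀ j, blk j ≠ i → (t • s) j = 0 := by
      intro j hj
      have : (t • s) j = t * s j := rfl
      rw [this, hs j hj, mul_zero]
    have e1 : ⟪g (x + t • s), s⟫ - ⟪g x, s⟫
        = ⟪blockProj blk i (g (x + t • s)) - blockProj blk i (g x), s⟫ := by
      rw [inner_sub_left, ← inner_bp_of_supp (g (x + t • s)) hs,
        ← inner_bp_of_supp (g x) hs]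
    have e2 := real_inner_le_norm
      (blockProj blk i (g (x + t • s)) - blockProj blk i (g x)) s
    have e3 := hlip i x (t • s) hsupp
    rw [norm_smul, Real.norm_eq_abs, abs_of_nonneg ht.1.le] at e3
    have hn : (0:ℝ) ≤ ‖s‖ := norm_nonneg s
    nlinarith [e1, e2.trans (mul_le_mul_of_nonneg_right e3 hn)]
  have h01 := hanti (Set.mem_Icc.2 ⟨le_refl 0, zero_le_one⟩)
    (Set.mem_Icc.2 ⟨zero_le_one, le_refl 1⟩) zero_le_one
  have e0 : φ 0 = f x := by simp [hφ]
  have e1 : φ 1 = f (x + s) - ⟪g x, s⟫ - L i / 2 * ‖s‖ ^ 2 := by simp [hφ]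
  rw [e0, e1] at h01
  linarith

lemma step_lemma (L : Fin N → ℝ) (hL : ∀ i, 0 < L i)
    (f h : En n → ℝ) (g : En n → En n) (hg : ∀ x, HasGradientAt f (g x) x)
    (hlip : ∀ (i : Fin N) (x s : En n), (∀ j, blk j ≠ i → s j = 0) →
      ‖blockProj blk i (g (x + s)) - blockProj blk i (g x)‖ ≤ L i * ‖s‖)
    (H : Fin N → En n → ℝ) (hHconv : ∀ k, ConvexOn ℝ Set.univ (H k))
    (hsep : ∀ x, h x = ∑ k, H k (blockProj blk k x))
    (F : En n → ℝ) (hF : ∀ x, F x = f x + h x)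
    (d : En n → Fin N → En n)
    (hdsupp : ∀ x i j, blk j ≠ i → d x i j = 0)
    (hdmin : ∀ (x : En n) (i : Fin N) (s : En n), (∀ j, blk j ≠ i → s j = 0) →
      f x + ⟪g x, d x i⟫ + L i / 2 * ‖d x i‖ ^ 2 + h (x + d x i) ≤
      f x + ⟪g x, s⟫ + L i / 2 * ‖s‖ ^ 2 + h (x + s))
    (dL : En n → En n)
    (hdL : ∀ x s : En n,
      f x + ⟪g x, dL x⟫ + (1 / 2) * blockNormSq blk L (dL x) + h (x + dL x) ≤
      f x + ⟪g x, s⟫ + (1 / 2) * blockNormSq blk L s + h (x + s))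
    (x : En n) :
    ∑ i, F (x + d x i) ≤ N * F x - (1/2) * blockNormSq blk L (dL x) := by
  have hconv := h_convex H hHconv h hsep
  have hkey := prox_key (blk := blk) hconv L hL x (dL x) (g x)
    (fun s => by have := hdL x s; linarith)
  set u := dL x with hu
  have hper : ∀ i, F (x + d x i) ≤
      f x + ⟪g x, blockProj blk i u⟫ + L i / 2 * ‖blockProj blk i u‖ ^ 2 +
        h (x + blockProj blk i u) := by
    intro i
    have h1 := descent f g hg L hlip i x (d x i) (fun j hj => hdsupp x i j hj)
    have h2 := hdmin x i (blockProj blk i u) (bp_supp i u)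
    rw [hF]
    linarith
  have hsum : ∑ i, (f x + ⟪g x, blockProj blk i u⟫ + L i / 2 * ‖blockProj blk i u‖ ^ 2 +
      h (x + blockProj blk i u)) =
      N * f x + ⟪g x, u⟫ + (1/2) * blockNormSq blk L u + (h (x + u) + ((N:ℝ) - 1) * h x) := by
    rw [Finset.sum_add_distrib, Finset.sum_add_distrib, Finset.sum_add_distrib,
      Finset.sum_const, Finset.card_univ, Fintype.card_fin,
      ← inner_sum_bp, sum_h_bp H h hsep x u]
    have : ∑ i, L i / 2 * ‖blockProj blk i u‖ ^ 2 = (1/2) * blockNormSq blk L u := by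
      rw [blockNormSq, Finset.mul_sum]
      exact Finset.sum_congr rfl fun i _ => by ring
    rw [this, nsmul_eq_mul]
  have hle := Finset.sum_le_sum fun i (_ : i ∈ Finset.univ) => hper i
  rw [hsum] at hle
  have hFx : F x = f x + h x := hF x
  have hxu : x + u = x + dL x := rfl
  nlinarith [hkey, hle]


/-- Convergence rate of the 1-random coordinate descent method with
uniform block selection for `F = f + h`.  The random iterates are encoded by their values
`X k w` along every realization `w : Fin k → Fin N` of the first `k` i.i.d. uniform block
indices, so that `E[(M₁(x^l, L))²] = N^{-l} ∑_w ‖d_L(X l w)‖_L²` where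
`M₁(x, L) = ‖d_L(x)‖_L`.  Then
`min_{0 ≤ l ≤ k} E[(M₁(x^l, L))²] ≤ 2N (F(x⁰) − F*)/(k+1)` with `F* = inf F`. -/
theorem stmt6 {n N : ℕ} (hN : 0 < N) (blk : Fin n → Fin N)
    (L : Fin N → ℝ) (hL : ∀ i, 0 < L i)
    (f h : En n → ℝ) (g : En n → En n) (hg : ∀ x, HasGradientAt f (g x) x)
    (hlip : ∀ (i : Fin N) (x s : En n), (∀ j, blk j ≠ i → s j = 0) →
      ‖blockProj blk i (g (x + s)) - blockProj blk i (g x)‖ ≤ L i * ‖s‖)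
    (H : Fin N → En n → ℝ) (hHconv : ∀ k, ConvexOn ℝ Set.univ (H k))
    (hsep : ∀ x, h x = ∑ k, H k (blockProj blk k x)) (hcont : Continuous h)
    (F : En n → ℝ) (hF : ∀ x, F x = f x + h x)
    (Fstar : ℝ) (hFstar : IsGLB (Set.range F) Fstar)
    -- the block coordinate descent directions
    (d : En n → Fin N → En n)
    (hdsupp : ∀ x i j, blk j ≠ i → d x i j = 0)
    (hdmin : ∀ (x : En n) (i : Fin N) (s : En n), (∀ j, blk j ≠ i → s j = 0) →
      f x + ⟪g x, d x i⟫ + L i / 2 * ‖d x i‖ ^ 2 + h (x + d x i) ≤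
      f x + ⟪g x, s⟫ + L i / 2 * ‖s‖ ^ 2 + h (x + s))
    -- the full proximal-gradient map `d_L`
    (dL : En n → En n)
    (hdL : ∀ x s : En n,
      f x + ⟪g x, dL x⟫ + (1 / 2) * blockNormSq blk L (dL x) + h (x + dL x) ≤
      f x + ⟪g x, s⟫ + (1 / 2) * blockNormSq blk L s + h (x + s))
    -- the trajectories of the algorithm along each realization of the random indices
    (x0 : En n) (X : (k : ℕ) → (Fin k → Fin N) → En n)
    (hX0 : ∀ w, X 0 w = x0)
    (hXs : ∀ k (w : Fin (k + 1) → Fin N),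
      X (k + 1) w = X k (fun t => w t.castSucc) +
        d (X k (fun t => w t.castSucc)) (w (Fin.last k)))
    (k : ℕ) :
    ∃ l ≤ k, ((N : ℝ) ^ l)⁻¹ * (∑ w : Fin l → Fin N, blockNormSq blk L (dL (X l w))) ≤
      2 * N * (F x0 - Fstar) / (k + 1) := by
  have hconv := h_convex H hHconv h hsep
  have hstep := step_lemma L hL f h g hg hlip H hHconv hsep F hF d hdsupp hdmin dL hdL
  have hNpos : (0:ℝ) < N := Nat.cast_pos.mpr hN
  set E : ℕ → ℝ := fun l => ∑ w : Fin l → Fin N, F (X l w) with hE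
  set G : ℕ → ℝ := fun l => ∑ w : Fin l → Fin N, blockNormSq blk L (dL (X l w)) with hG
  have hdecomp : ∀ (l : ℕ) (φ : (Fin (l+1) → Fin N) → ℝ),
      ∑ w : Fin (l+1) → Fin N, φ w
        = ∑ w' : Fin l → Fin N, ∑ a : Fin N, φ (Fin.insertNth (α := fun _ => Fin N) (Fin.last l) a w') := by
    intro l φ
    rw [← (Fin.insertNthEquiv (fun _ => Fin N) (Fin.last l)).sum_comp φ]
    rw [Fintype.sum_prod_type, Finset.sum_comm]
    rfl
  have hXval : ∀ (l : ℕ) (a : Fin N) (w' : Fin l → Fin N),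
      X (l+1) (Fin.insertNth (α := fun _ => Fin N) (Fin.last l) a w') = X l w' + d (X l w') a := by
    intro l a w'
    rw [hXs l]
    have h1 : (fun t : Fin l => Fin.insertNth (α := fun _ => Fin N) (Fin.last l) a w' t.castSucc) = w' := by
      funext t
      rw [← Fin.succAbove_last, Fin.insertNth_apply_succAbove]
    have h2 : Fin.insertNth (α := fun _ => Fin N) (Fin.last l) a w' (Fin.last l) = a :=
      Fin.insertNth_apply_same _ _ _
    rw [h1, h2]
  have hstep' : ∀ l, E (l+1) ≤ N * E l - (1/2) * G l := by
    intro l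
    have : E (l+1) = ∑ w' : Fin l → Fin N, ∑ a : Fin N,
        F (X l w' + d (X l w') a) := by
      simp only [hE]
      rw [hdecomp l (fun w => F (X (l+1) w))]
      exact Finset.sum_congr rfl fun w' _ => Finset.sum_congr rfl fun a _ => by
        rw [hXval l a w']
    rw [this]
    simp only [hG, hE]
    calc ∑ w' : Fin l → Fin N, ∑ a : Fin N, F (X l w' + d (X l w') a)
        ≤ ∑ w' : Fin l → Fin N,
            ((N : ℝ) * F (X l w') - (1/2) * blockNormSq blk L (dL (X l w'))) :=
          Finset.sum_le_sum fun w' _ => hstep (X l w')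
      _ = N * (∑ w' : Fin l → Fin N, F (X l w'))
            - (1/2) * ∑ w' : Fin l → Fin N, blockNormSq blk L (dL (X l w')) := by
          rw [Finset.sum_sub_distrib, ← Finset.mul_sum, ← Finset.mul_sum]
  have hcard : ∀ l : ℕ, (Fintype.card (Fin l → Fin N) : ℝ) = (N:ℝ) ^ l := by
    intro l
    rw [Fintype.card_fun, Fintype.card_fin, Fintype.card_fin]
    push_cast
    ring
  have hlb : ∀ l, (N:ℝ) ^ l * Fstar ≤ E l := by
    intro l
    have : ∑ w : Fin l → Fin N, Fstar ≤ E l :=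
      Finset.sum_le_sum fun w _ => hFstar.1 ⟨X l w, rfl⟩
    simp only [hE] at this ⊢
    rwa [Finset.sum_const, Finset.card_univ, nsmul_eq_mul, hcard l] at this
  have hE0 : E 0 = F x0 := by
    simp only [hE]
    rw [Finset.sum_congr rfl fun w _ => by rw [hX0 w]]
    rw [Finset.sum_const, Finset.card_univ, nsmul_eq_mul, hcard 0]
    norm_num
  set Eb : ℕ → ℝ := fun l => ((N:ℝ) ^ l)⁻¹ * E l with hEb
  set Gb : ℕ → ℝ := fun l => ((N:ℝ) ^ l)⁻¹ * G l with hGb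
  have hstep2 : ∀ l, Eb (l+1) + (1/(2*N)) * Gb l ≤ Eb l := by
    intro l
    have hpow : (0:ℝ) < (N:ℝ) ^ (l+1) := by positivity
    have h1 : ((N:ℝ) ^ (l+1))⁻¹ * E (l+1)
        ≤ ((N:ℝ) ^ (l+1))⁻¹ * ((N:ℝ) * E l - (1/2) * G l) :=
      mul_le_mul_of_nonneg_left (hstep' l) (by positivity)
    have h2 : ((N:ℝ) ^ (l+1))⁻¹ * ((N:ℝ) * E l - (1/2) * G l)
        = ((N:ℝ) ^ l)⁻¹ * E l - (1/(2*N)) * (((N:ℝ) ^ l)⁻¹ * G l) := by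
      field_simp
      ring
    simp only [hEb, hGb]
    rw [h2] at h1
    linarith
  have htel : ∀ m : ℕ, Eb m + (1/(2*N)) * ∑ l ∈ Finset.range m, Gb l ≤ Eb 0 := by
    intro m
    induction m with
    | zero => simp
    | succ m ih =>
      rw [Finset.sum_range_succ]
      have := hstep2 m
      nlinarith [this, ih]
  have hEb0 : Eb 0 = F x0 := by simp only [hEb]; rw [hE0]; norm_num
  have hEbk : Fstar ≤ Eb (k+1) := by
    simp only [hEb]
    have hpow : (0:ℝ) < (N:ℝ) ^ (k+1) := by positivity
    have := mul_le_mul_of_nonneg_left (hlb (k+1)) (le_of_lt (inv_pos.mpr hpow))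
    calc Fstar = ((N:ℝ) ^ (k+1))⁻¹ * ((N:ℝ) ^ (k+1) * Fstar) := by field_simp
      _ ≤ ((N:ℝ) ^ (k+1))⁻¹ * E (k+1) := this
  have hsumG : ∑ l ∈ Finset.range (k+1), Gb l ≤ 2 * N * (F x0 - Fstar) := by
    have h1 := htel (k+1)
    rw [hEb0] at h1
    have h2 : (1/(2*(N:ℝ))) * ∑ l ∈ Finset.range (k+1), Gb l ≤ F x0 - Fstar := by
      linarith
    have h3 : (0:ℝ) < 2 * N := by linarith
    calc ∑ l ∈ Finset.range (k+1), Gb l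
        = (2 * N) * ((1/(2*(N:ℝ))) * ∑ l ∈ Finset.range (k+1), Gb l) := by
          field_simp
      _ ≤ (2 * N) * (F x0 - Fstar) := mul_le_mul_of_nonneg_left h2 h3.le
  obtain ⟨l, hlmem, hlmin⟩ := Finset.exists_min_image (Finset.range (k+1)) Gb
    ⟨0, Finset.mem_range.mpr (Nat.succ_pos k)⟩
  refine ⟨l, Nat.lt_succ_iff.mp (Finset.mem_range.mp hlmem), ?_⟩
  have hcardsum : (k+1 : ℝ) * Gb l ≤ ∑ l' ∈ Finset.range (k+1), Gb l' := by
    have := Finset.card_nsmul_le_sum (Finset.range (k+1)) Gb (Gb l)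
      (fun l' hl' => hlmin l' hl')
    rwa [Finset.card_range, nsmul_eq_mul, Nat.cast_add, Nat.cast_one] at this
  have hk1 : (0:ℝ) < (k:ℝ) + 1 := by positivity
  have hfinal : Gb l ≤ 2 * N * (F x0 - Fstar) / ((k:ℝ) + 1) := by
    rw [le_div_iff₀ hk1]
    nlinarith [hcardsum, hsumG]
  exact hfinal
end
end

section
/- For any vector Γ̃ ∈ ℝ^N with positive entries, a feasible point x* (with aᵀx* = b) is a stationary point of min { f(x) + h(x) : aᵀx = b } (i.e. there exists λ* with 0 ∈ ∇f(x*) + ∂h(x*) + λ* a) if and only if d_{NΓ̃}(x*) = 0, where d_{NΓ̃}(x*) = argmin_{s : aᵀs = 0} f(x*) + ⟨∇f(x*), s⟩ + (N/2)‖s‖_{Γ̃}² + h(x* + s). -/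
open scoped BigOperators RealInnerProductSpace
open Finset Filter

set_option maxHeartbeats 1000000

noncomputable section

/-- `gh` is a subgradient of the convex function `h` at `x`. -/
def IsSubgradientAt {n : ℕ} (h : En n → ℝ) (gh x : En n) : Prop :=
  ∀ y, h x + ⟪gh, y - x⟫ ≤ h y

/-- For any block-weight vector `Γ̃` with positive entries, a feasible
point `x*` (i.e. `aᵀx* = b`) is a stationary point of `min {f(x) + h(x) : aᵀx = b}`
(i.e. there is `λ*` with `0 ∈ ∇f(x*) + ∂h(x*) + λ* a`) iff `d_{NΓ̃}(x*) = 0`, where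
`d_{NΓ̃}(x*)` minimizes `s ↦ f(x*) + ⟨∇f(x*), s⟩ + (N/2)‖s‖_{Γ̃}² + h(x* + s)` over
`S = {s : aᵀs = 0}`.  Here `h` is convex, continuous and coordinatewise separable. -/
theorem stmt9 {n N : ℕ} (hN : 0 < N) (blk : Fin n → Fin N)
    (Γt : Fin N → ℝ) (hΓt : ∀ i, 0 < Γt i)
    (f h : En n → ℝ) (g : En n → En n) (hg : ∀ x, HasGradientAt f (g x) x)
    (Hc : Fin n → ℝ → ℝ) (hHconv : ∀ l, ConvexOn ℝ Set.univ (Hc l))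
    (hsep : ∀ x : En n, h x = ∑ l, Hc l (x l)) (hcont : Continuous h)
    (a : En n) (ha : a ≠ 0) (b : ℝ)
    (xstar : En n) (hfeas : ⟪a, xstar⟫ = b)
    (dx : En n) (hdxfeas : ⟪a, dx⟫ = 0)
    (hdxmin : ∀ s : En n, ⟪a, s⟫ = 0 →
      f xstar + ⟪g xstar, dx⟫ + (N : ℝ) / 2 * blockNormSq blk Γt dx + h (xstar + dx) ≤
      f xstar + ⟪g xstar, s⟫ + (N : ℝ) / 2 * blockNormSq blk Γt s + h (xstar + s)) :
    (∃ (lam : ℝ) (gh : En n), IsSubgradientAt h gh xstar ∧ g xstar + gh + lam • a = 0) ↔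
      dx = 0 := by
  classical
  have hQnonneg : ∀ s : En n, 0 ≤ blockNormSq blk Γt s := fun s =>
    Finset.sum_nonneg fun i _ => mul_nonneg (hΓt i).le (by positivity)
  have hProjZero : ∀ i, blockProj blk i (0 : En n) = 0 := by
    intro i; ext j; simp [blockProj]
  have hQzero : blockNormSq blk Γt (0 : En n) = 0 := by
    simp [blockNormSq, hProjZero]
  have hQeqzero : ∀ s : En n, blockNormSq blk Γt s = 0 → s = 0 := by
    intro s hs
    have h0 : ∀ i ∈ Finset.univ, Γt i * ‖blockProj blk i s‖ ^ 2 = 0 :=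
      (Finset.sum_eq_zero_iff_of_nonneg
        (fun i _ => mul_nonneg (hΓt i).le (by positivity))).mp hs
    ext j
    have h1 := h0 (blk j) (Finset.mem_univ _)
    have h2 : ‖blockProj blk (blk j) s‖ ^ 2 = 0 :=
      (mul_eq_zero.mp h1).resolve_left (ne_of_gt (hΓt (blk j)))
    have hproj0 : blockProj blk (blk j) s = 0 :=
      norm_eq_zero.mp (by nlinarith [norm_nonneg (blockProj blk (blk j) s)])
    have h3 : blockProj blk (blk j) s j = 0 := by rw [hproj0]; rfl
    simpa [blockProj] using h3
  -- convexity of h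
  have hconv : ∀ (x y : En n) (p q : ℝ), 0 ≤ p → 0 ≤ q → p + q = 1 →
      h (p • x + q • y) ≤ p * h x + q * h y := by
    intro x y p q hp hq hpq
    calc h (p • x + q • y) = ∑ l, Hc l (p • x l + q • y l) := hsep _
      _ ≤ ∑ l, (p • Hc l (x l) + q • Hc l (y l)) :=
          Finset.sum_le_sum fun l _ =>
            (hHconv l).2 (Set.mem_univ _) (Set.mem_univ _) hp hq hpq
      _ = p * h x + q * h y := by
          rw [hsep x, hsep y, Finset.sum_add_distrib, ← Finset.smul_sum, ← Finset.smul_sum]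
          simp [smul_eq_mul]
  set gs := g xstar with hgs
  set ψ : En n → ℝ := fun s => ⟪gs, s⟫ + h (xstar + s) - h xstar with hψ
  have hψdef : ∀ s : En n, ψ s = ⟪gs, s⟫ + h (xstar + s) - h xstar := fun s => rfl
  constructor
  · -- stationary → dx = 0
    rintro ⟨lam, gh, hsub, heq⟩
    have hm := hdxmin 0 (by simp)
    simp only [inner_zero_right, hQzero, add_zero, mul_zero] at hm
    have hsg := hsub (xstar + dx)
    have hd : xstar + dx - xstar = dx := by abel
    rw [hd] at hsg
    have h1 : gh = -gs - lam • a := by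
      calc gh = (gs + gh + lam • a) - gs - lam • a := by module
        _ = 0 - gs - lam • a := by rw [heq]
        _ = -gs - lam • a := by abel
    have hghdx : ⟪gs, dx⟫ + ⟪gh, dx⟫ = -lam * ⟪a, dx⟫ := by
      rw [h1, inner_sub_left, inner_neg_left, real_inner_smul_left]
      ring
    rw [hdxfeas] at hghdx
    have hQle : (N : ℝ) / 2 * blockNormSq blk Γt dx ≤ 0 := by linarith
    have hQ : blockNormSq blk Γt dx = 0 := by
      have hN' : (0 : ℝ) < (N : ℝ) / 2 := by positivity
      nlinarith [hQnonneg dx]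
    exact hQeqzero dx hQ
  · -- dx = 0 → stationary
    intro hdx0
    subst hdx0
    simp only [inner_zero_right, hQzero, add_zero, mul_zero] at hdxmin
    -- step 1: ψ ≥ 0 on the hyperplane
    have hψnonneg : ∀ s : En n, ⟪a, s⟫ = 0 → 0 ≤ ψ s := by
      intro s hS
      have hQs := hQnonneg s
      set c : ℝ := (N : ℝ) / 2 * blockNormSq blk Γt s with hc
      have hc0 : 0 ≤ c := by positivity
      have key : ∀ t : ℝ, 0 < t → t ≤ 1 → -(c * t) ≤ ψ s := by
        intro t ht0 ht1
        have hts : ⟪a, t • s⟫ = 0 := by rw [real_inner_smul_right, hS, mul_zero]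
        have hm := hdxmin (t • s) hts
        have hQts : blockNormSq blk Γt (t • s) = t ^ 2 * blockNormSq blk Γt s := by
          unfold blockNormSq
          rw [Finset.mul_sum]
          apply Finset.sum_congr rfl
          intro i _
          have hp : blockProj blk i (t • s) = t • blockProj blk i s := by
            ext j
            simp only [blockProj, PiLp.smul_apply, smul_eq_mul, PiLp.toLp_apply]
            split <;> simp
          rw [hp, norm_smul]
          simp only [Real.norm_eq_abs, mul_pow, sq_abs]
          ring
        have hcv : h (xstar + t • s) ≤ (1 - t) * h xstar + t * h (xstar + s) := by
          have hco := hconv xstar (xstar + s) (1 - t) t (by linarith) ht0.le (by ring)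
          have heqp : (1 - t) • xstar + t • (xstar + s) = xstar + t • s := by module
          rwa [heqp] at hco
        have hinner : ⟪gs, t • s⟫ = t * ⟪gs, s⟫ := real_inner_smul_right _ _ _
        rw [hinner, hQts] at hm
        have hceq : (N : ℝ) / 2 * (t ^ 2 * blockNormSq blk Γt s) = c * t ^ 2 := by
          rw [hc]; ring
        rw [hceq] at hm
        have h4 : 0 ≤ t * ⟪gs, s⟫ + c * t ^ 2 + t * (h (xstar + s) - h xstar) := by
          linarith
        rw [hψdef]
        nlinarith [h4, ht0]
      by_contra hneg
      push_neg at hneg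
      have hψpos : 0 < -(ψ s) := by linarith
      set t := min 1 (-(ψ s) / (2 * c + 2)) with htdef
      have hpos2 : (0 : ℝ) < 2 * c + 2 := by linarith
      have ht0 : 0 < t := lt_min one_pos (div_pos hψpos hpos2)
      have ht1 : t ≤ 1 := min_le_left _ _
      have ht2 : t ≤ -(ψ s) / (2 * c + 2) := min_le_right _ _
      have hkey := key t ht0 ht1
      have ht3 : t * (2 * c + 2) ≤ -(ψ s) := (le_div_iff₀ hpos2).mp ht2
      have ht4 : t * (2 * c + 2) = 2 * (c * t) + 2 * t := by ring
      linarith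
    -- step 2: separation
    set K : Set (ℝ × ℝ) := {p | ∃ s : En n, ⟪a, s⟫ = p.1 ∧ ψ s < p.2} with hK
    have hψcont : Continuous ψ := by
      apply Continuous.sub
      · exact (continuous_const.inner continuous_id).add
          (hcont.comp (continuous_const.add continuous_id))
      · exact continuous_const
    have hKconv : Convex ℝ K := by
      rintro x ⟨s1, hs1, hr1⟩ y ⟨s2, hs2, hr2⟩ p q hp hq hpq
      refine ⟨p • s1 + q • s2, ?_, ?_⟩
      · simp only [inner_add_right, real_inner_smul_right, hs1, hs2,
          Prod.fst_add, Prod.smul_fst, smul_eq_mul]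
      · have hcv : h (xstar + (p • s1 + q • s2)) ≤
            p * h (xstar + s1) + q * h (xstar + s2) := by
          have hco := hconv (xstar + s1) (xstar + s2) p q hp hq hpq
          have hxx : p • xstar + q • xstar = xstar := by
            rw [← add_smul, hpq, one_smul]
          have heqp : p • (xstar + s1) + q • (xstar + s2)
              = xstar + (p • s1 + q • s2) := by
            rw [smul_add, smul_add]
            rw [show p • xstar + p • s1 + (q • xstar + q • s2)
                = (p • xstar + q • xstar) + (p • s1 + q • s2) by abel, hxx]
          rwa [heqp] at hco
        have hin : ⟪gs, p • s1 + q • s2⟫ = p * ⟪gs, s1⟫ + q * ⟪gs, s2⟫ := by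
          rw [inner_add_right, real_inner_smul_right, real_inner_smul_right]
        have hone : p * h xstar + q * h xstar = h xstar := by
          rw [← add_mul, hpq, one_mul]
        have hψle : ψ (p • s1 + q • s2) ≤ p * ψ s1 + q * ψ s2 := by
          rw [hψdef, hψdef, hψdef, hin]
          linarith
        have hlt : p * ψ s1 + q * ψ s2 < p * x.2 + q * y.2 := by
          rcases eq_or_lt_of_le hp with hp0 | hp0
          · have hq1 : q = 1 := by linarith
            rw [← hp0, hq1]; simpa using hr2
          · rcases eq_or_lt_of_le hq with hq0 | hq0
            · have hp1 : p = 1 := by linarith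
              rw [← hq0, hp1]; simpa using hr1
            · have h5 := mul_lt_mul_of_pos_left hr1 hp0
              have h6 := mul_lt_mul_of_pos_left hr2 hq0
              linarith
        simp only [Prod.snd_add, Prod.smul_snd, smul_eq_mul]
        linarith
    have haa : ⟪a, a⟫ ≠ (0:ℝ) := fun hc0 => ha (inner_self_eq_zero.mp hc0)
    have hKopen : IsOpen K := by
      rw [isOpen_iff_mem_nhds]
      rintro ⟨u, r⟩ ⟨s, hsu, hsr⟩
      have hcont' : Continuous fun p : ℝ × ℝ =>
          p.2 - ψ (s + ((p.1 - u) / ⟪a, a⟫) • a) := by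
        apply continuous_snd.sub
        apply hψcont.comp
        exact continuous_const.add
          (((continuous_fst.sub continuous_const).div_const _).smul continuous_const)
      have hmem : (u, r) ∈ (fun p : ℝ × ℝ =>
          p.2 - ψ (s + ((p.1 - u) / ⟪a, a⟫) • a)) ⁻¹' Set.Ioi 0 := by
        simp only [Set.mem_preimage, Set.mem_Ioi, sub_self, zero_div, zero_smul, add_zero]
        linarith
      refine Filter.mem_of_superset
        ((hcont'.isOpen_preimage _ isOpen_Ioi).mem_nhds hmem) ?_
      rintro ⟨u', r'⟩ hp
      simp only [Set.mem_preimage, Set.mem_Ioi, sub_pos] at hp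
      refine ⟨s + ((u' - u) / ⟪a, a⟫) • a, ?_, hp⟩
      rw [inner_add_right, real_inner_smul_right, hsu, div_mul_cancel₀ _ haa]
      ring
    have h00 : ((0, 0) : ℝ × ℝ) ∉ K := by
      rintro ⟨s, hs1, hs2⟩
      exact absurd hs2 (not_lt.mpr (hψnonneg s hs1))
    obtain ⟨F, hF⟩ := geometric_hahn_banach_open_point hKconv hKopen h00
    have hF0 : F ((0, 0) : ℝ × ℝ) = 0 := by
      have h7 : ((0, 0) : ℝ × ℝ) = 0 := rfl
      rw [h7, map_zero]
    rw [hF0] at hF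
    set μ : ℝ := F (1, 0) with hμ
    set ν : ℝ := F (0, 1) with hν
    have hdecomp : ∀ u r : ℝ, F (u, r) = u * μ + r * ν := by
      intro u r
      have heq : ((u, r) : ℝ × ℝ) = u • ((1:ℝ), (0:ℝ)) + r • ((0:ℝ), (1:ℝ)) := by
        simp [Prod.ext_iff]
      rw [heq, map_add, map_smul, map_smul, hμ, hν, smul_eq_mul, smul_eq_mul]
    have hνneg : ν < 0 := by
      have hmem : ((0, 1) : ℝ × ℝ) ∈ K := ⟨0, by simp, by rw [hψdef]; simp⟩
      have h8 := hF _ hmem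
      rwa [hdecomp, zero_mul, one_mul, zero_add] at h8
    have hkey : ∀ s : En n, ⟪a, s⟫ * μ + ψ s * ν ≤ 0 := by
      intro s
      have hstep : ∀ ε : ℝ, 0 < ε → ⟪a, s⟫ * μ + ψ s * ν < ε * (-ν) := by
        intro ε hε
        have hmem : ((⟪a, s⟫, ψ s + ε) : ℝ × ℝ) ∈ K := ⟨s, rfl, show ψ s < ψ s + ε by linarith⟩
        have h9 := hF _ hmem
        rw [hdecomp] at h9
        have hexp : (ψ s + ε) * ν = ψ s * ν + ε * ν := by ring
        linarith
      by_contra hpos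
      push_neg at hpos
      set X := ⟪a, s⟫ * μ + ψ s * ν with hX
      have hν' : ν ≠ 0 := hνneg.ne
      have hε := hstep (X / (2 * (-ν))) (div_pos hpos (by linarith))
      have h10 : X / (2 * (-ν)) * (-ν) = X / 2 := by
        field_simp
      rw [h10] at hε
      linarith
    refine ⟨μ / ν, -gs - (μ / ν) • a, ?_, ?_⟩
    · intro y
      set s := y - xstar with hs
      have hxy : xstar + s = y := by rw [hs]; abel
      have hk := hkey s
      have hgoal : 0 ≤ ψ s + (μ / ν) * ⟪a, s⟫ := by
        have hν' : ν ≠ 0 := hνneg.ne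
        have h3 : (ψ s + (μ / ν) * ⟪a, s⟫) * (-ν) = -(⟪a, s⟫ * μ + ψ s * ν) := by
          field_simp
          ring
        have h4 : 0 ≤ (ψ s + (μ / ν) * ⟪a, s⟫) * (-ν) := by rw [h3]; linarith
        have h5 : (0:ℝ) < -ν := by linarith
        have h6 : (0:ℝ) * (-ν) ≤ (ψ s + (μ / ν) * ⟪a, s⟫) * (-ν) := by
          rw [zero_mul]; exact h4
        exact (mul_le_mul_iff_of_pos_right h5).mp h6
      have hin : ⟪-gs - (μ / ν) • a, s⟫ = -⟪gs, s⟫ - (μ / ν) * ⟪a, s⟫ := by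
        rw [inner_sub_left, inner_neg_left, real_inner_smul_left]
      rw [hin]
      rw [hψdef, hxy] at hgoal
      linarith
    · show gs + (-gs - (μ / ν) • a) + (μ / ν) • a = 0
      module
end
end

section
/- Let S = Null(aᵀ) ⊆ ℝ^n for a nonzero vector a. If d ∈ S is an elementary vector of S (a nonzero vector of S having no nonzero conformal vector in S with strictly smaller support), then |supp(d)| ≤ 2. Moreover, any d ∈ S admits a conformal realization d = d¹ + ⋯ + d^s where each d^t ∈ S is an elementary vector conformal to d. -/
open scoped BigOperators
open Finset

noncomputable section

/-- `d'` is conformal to `d`: `supp(d') ⊆ supp(d)` and `d'_j d_j ≥ 0` for all `j`. -/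
def ConformalTo {n : ℕ} (d' d : Fin n → ℝ) : Prop :=
  (∀ j, d j = 0 → d' j = 0) ∧ ∀ j, 0 ≤ d' j * d j

/-- `d` is an elementary vector of the subspace `S = Null(aᵀ)`: a nonzero vector of `S`
having no nonzero conformal vector in `S` with strictly smaller support. -/
def IsElementary {n : ℕ} (a d : Fin n → ℝ) : Prop :=
  (∑ l, a l * d l = 0) ∧ d ≠ 0 ∧
    ∀ d' : Fin n → ℝ, (∑ l, a l * d' l = 0) → d' ≠ 0 → ConformalTo d' d →
      {l | d' l ≠ 0} ⊂ {l | d l ≠ 0} → False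

lemma conformal_trans {n : ℕ} {x y z : Fin n → ℝ}
    (hxy : ConformalTo x y) (hyz : ConformalTo y z) : ConformalTo x z := by
  refine ⟨fun j hz => hxy.1 j (hyz.1 j hz), fun j => ?_⟩
  by_cases hy : y j = 0
  · rw [hxy.1 j hy]; simp
  · have h1 := hxy.2 j
    have h2 := hyz.2 j
    nlinarith [sq_nonneg (y j), mul_self_pos.mpr hy]

/-- Key lemma: peel off an elementary conformal piece. -/
lemma key_piece {n : ℕ} (a d : Fin n → ℝ) (hd0 : d ≠ 0) (hds : ∑ l, a l * d l = 0) :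
    ∃ p : Fin n → ℝ, IsElementary a p ∧ ConformalTo p d ∧
      Set.ncard {l | p l ≠ 0} ≤ 2 ∧
      ConformalTo (fun l => d l - p l) d ∧
      {l | d l - p l ≠ 0} ⊂ {l | d l ≠ 0} := by
  classical
  by_cases hA : ∃ i, d i ≠ 0 ∧ a i = 0
  · -- Case A : a coordinate of the support where a vanishes
    obtain ⟨i, hdi, hai⟩ := hA
    refine ⟨fun l => if l = i then d i else 0, ⟨?_, ?_, ?_⟩, ⟨?_, ?_⟩, ?_, ⟨?_, ?_⟩, ?_⟩
    · -- in S
      rw [Finset.sum_eq_single i]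
      · simp [hai]
      · intro b _ hb; simp [hb]
      · simp
    · -- nonzero
      intro h
      have := congrFun h i
      simp [hdi] at this
    · -- minimality
      intro q hqs hq0 hqc hss
      have hsupp : {l | (if l = i then d i else 0) ≠ 0} = {i} := by
        ext l
        by_cases hl : l = i <;> simp [hl, hdi]
      rw [hsupp] at hss
      rw [Set.ssubset_singleton_iff] at hss
      apply hq0
      funext l
      simp only [Pi.zero_apply]
      by_contra hql
      have hmem : l ∈ {l | q l ≠ 0} := hql
      rw [hss] at hmem
      exact hmem
    · -- conformal subset
      intro j hj
      by_cases hji : j = i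
      · subst hji; exact absurd hj hdi
      · simp [hji]
    · -- conformal sign
      intro j
      by_cases hji : j = i
      · subst hji; simp [mul_self_nonneg]
      · simp [hji]
    · -- ncard ≤ 2
      have hsupp : {l | (if l = i then d i else 0) ≠ 0} = {i} := by
        ext l
        by_cases hl : l = i <;> simp [hl, hdi]
      rw [hsupp, Set.ncard_singleton]; norm_num
    · -- d - p conformal subset
      intro j hj
      by_cases hji : j = i
      · subst hji; exact absurd hj hdi
      · simp [hji, hj]
    · -- d - p conformal sign
      intro j
      by_cases hji : j = i
      · subst hji; simp
      · simp [hji, mul_self_nonneg]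
    · -- strict support decrease
      constructor
      · intro l hl
        simp only [Set.mem_setOf_eq] at hl ⊢
        intro hdl
        apply hl
        by_cases hli : l = i
        · subst hli; simp
        · simp [hli, hdl]
      · intro hsub
        have : d i - (if i = i then d i else 0) ≠ 0 := hsub hdi
        simp at this
  · -- Case B : a is nonzero on all of the support of d
    push_neg at hA
    obtain ⟨i0, hi0⟩ : ∃ i, d i ≠ 0 := Function.ne_iff.mp hd0
    have hai0 : a i0 ≠ 0 := hA i0 hi0
    have hpos : ∃ i, 0 < a i * d i := by
      by_contra h
      push_neg at h
      have := (Finset.sum_eq_zero_iff_of_nonpos (fun l _ => h l)).mp hds i0 (mem_univ _)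
      exact absurd this (mul_ne_zero hai0 hi0)
    have hneg : ∃ j, a j * d j < 0 := by
      by_contra h
      push_neg at h
      have := (Finset.sum_eq_zero_iff_of_nonneg (fun l _ => h l)).mp hds i0 (mem_univ _)
      exact absurd this (mul_ne_zero hai0 hi0)
    obtain ⟨i, hi⟩ := hpos
    obtain ⟨j, hj⟩ := hneg
    have hij : i ≠ j := by rintro rfl; linarith
    have hdi : d i ≠ 0 := by intro h; rw [h, mul_zero] at hi; exact lt_irrefl 0 hi
    have hdj : d j ≠ 0 := by intro h; rw [h, mul_zero] at hj; exact lt_irrefl 0 hj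
    have hai : a i ≠ 0 := hA i hdi
    have haj : a j ≠ 0 := hA j hdj
    set ci : ℝ := -(a j * d j) with hci_def
    set cj : ℝ := a i * d i with hcj_def
    have hci : 0 < ci := by simp [hci_def]; linarith
    have hcj : 0 < cj := hi
    set cm : ℝ := max ci cj with hcm_def
    have hcm : 0 < cm := lt_max_of_lt_left hci
    set lam : ℝ := cm⁻¹ with hlam_def
    have hlam : 0 < lam := by positivity
    set p : Fin n → ℝ := fun l => if l = i then lam * ci * d i else if l = j then lam * cj * d j else 0 with hp_def
    have hpi : p i = lam * ci * d i := by simp [hp_def]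
    have hpj : p j = lam * cj * d j := by simp [hp_def, hij.symm, Ne.symm hij]
    have hpo : ∀ l, l ≠ i → l ≠ j → p l = 0 := by
      intro l h1 h2; simp [hp_def, h1, h2]
    have hcmc : cm * cm⁻¹ = 1 := mul_inv_cancel₀ (ne_of_gt hcm)
    have hlci : lam * ci ≤ 1 := by
      have h1 : ci ≤ cm := le_max_left ci cj
      rw [hlam_def]
      nlinarith [inv_nonneg.mpr hcm.le]
    have hlcj : lam * cj ≤ 1 := by
      have h1 : cj ≤ cm := le_max_right ci cj
      rw [hlam_def]
      nlinarith [inv_nonneg.mpr hcm.le]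
    have hsum2 : ∀ q : Fin n → ℝ, (∀ l, l ≠ i → l ≠ j → q l = 0) →
        ∑ l, a l * q l = a i * q i + a j * q j := by
      intro q hq
      rw [← Finset.sum_subset (Finset.subset_univ ({i, j} : Finset (Fin n)))]
      · rw [Finset.sum_pair hij]
      · intro l _ hl
        simp only [Finset.mem_insert, Finset.mem_singleton] at hl
        push_neg at hl
        rw [hq l hl.1 hl.2, mul_zero]
    have hpS : ∑ l, a l * p l = 0 := by
      rw [hsum2 p hpo, hpi, hpj, hci_def, hcj_def]
      ring
    have hpne : p ≠ 0 := by
      intro h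
      have := congrFun h i
      rw [hpi] at this
      simp only [Pi.zero_apply] at this
      exact (mul_ne_zero (mul_ne_zero (ne_of_gt hlam) (ne_of_gt hci)) hdi) this
    have hsuppp : {l | p l ≠ 0} = {i, j} := by
      ext l
      simp only [Set.mem_setOf_eq, Set.mem_insert_iff, Set.mem_singleton_iff]
      constructor
      · intro hl
        by_contra h
        push_neg at h
        exact hl (hpo l h.1 h.2)
      · rintro (rfl | rfl)
        · rw [hpi]
          exact mul_ne_zero (mul_ne_zero (ne_of_gt hlam) (ne_of_gt hci)) hdi
        · rw [hpj]
          exact mul_ne_zero (mul_ne_zero (ne_of_gt hlam) (ne_of_gt hcj)) hdj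
    refine ⟨p, ⟨hpS, hpne, ?_⟩, ⟨?_, ?_⟩, ?_, ⟨?_, ?_⟩, ?_, ?_⟩
    · -- minimality
      intro q hqs hq0 hqc hss
      rw [hsuppp] at hss
      have hqout : ∀ l, l ≠ i → l ≠ j → q l = 0 := by
        intro l h1 h2
        exact hqc.1 l (hpo l h1 h2)
      have hqsum : a i * q i + a j * q j = 0 := by rw [← hsum2 q hqout]; exact hqs
      obtain ⟨m, hm1, hm2⟩ := Set.exists_of_ssubset hss
      simp only [Set.mem_insert_iff, Set.mem_singleton_iff] at hm1
      simp only [Set.mem_setOf_eq, not_not] at hm2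
      apply hq0
      have hqij : q i = 0 ∧ q j = 0 := by
        rcases hm1 with hmi | hmj
        · rw [hmi] at hm2
          rw [hm2, mul_zero, zero_add] at hqsum
          exact ⟨hm2, (mul_eq_zero.mp hqsum).resolve_left haj⟩
        · rw [hmj] at hm2
          rw [hm2, mul_zero, add_zero] at hqsum
          exact ⟨(mul_eq_zero.mp hqsum).resolve_left hai, hm2⟩
      funext l
      by_cases h1 : l = i
      · subst h1; exact hqij.1
      by_cases h2 : l = j
      · subst h2; exact hqij.2
      · exact hqout l h1 h2
    · -- p conformal subset
      intro l hl
      by_cases h1 : l = i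
      · rw [h1] at hl; exact absurd hl hdi
      by_cases h2 : l = j
      · rw [h2] at hl; exact absurd hl hdj
      · exact hpo l h1 h2
    · -- p conformal sign
      intro l
      by_cases h1 : l = i
      · rw [h1, hpi]
        nlinarith [mul_pos hlam hci, mul_self_nonneg (d i)]
      by_cases h2 : l = j
      · rw [h2, hpj]
        nlinarith [mul_pos hlam hcj, mul_self_nonneg (d j)]
      · rw [hpo l h1 h2]; simp
    · -- ncard ≤ 2
      rw [hsuppp, Set.ncard_pair hij]
    · -- d - p conformal subset
      intro l hl
      simp only
      by_cases h1 : l = i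
      · rw [h1] at hl; exact absurd hl hdi
      by_cases h2 : l = j
      · rw [h2] at hl; exact absurd hl hdj
      · rw [hpo l h1 h2, hl]; ring
    · -- d - p conformal sign
      intro l
      simp only
      by_cases h1 : l = i
      · rw [h1, hpi]
        nlinarith [mul_self_nonneg (d i)]
      by_cases h2 : l = j
      · rw [h2, hpj]
        nlinarith [mul_self_nonneg (d j)]
      · rw [hpo l h1 h2]
        nlinarith [mul_self_nonneg (d l)]
    · -- strict support subset : ⊆
      intro l hl
      simp only [Set.mem_setOf_eq] at hl ⊢
      intro hdl
      apply hl
      by_cases h1 : l = i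
      · rw [h1] at hdl; exact absurd hdl hdi
      by_cases h2 : l = j
      · rw [h2] at hdl; exact absurd hdl hdj
      · rw [hpo l h1 h2, hdl]; ring
    · -- strict support subset : not superset
      intro hsub
      rcases max_choice ci cj with hmc | hmc
      · have hvan : d i - p i = 0 := by
          rw [hpi, hlam_def, hcm_def, hmc]
          field_simp
          ring
        have := hsub hdi
        simp only [Set.mem_setOf_eq] at this
        exact this hvan
      · have hvan : d j - p j = 0 := by
          rw [hpj, hlam_def, hcm_def, hmc]
          field_simp
          ring
        have := hsub hdj
        simp only [Set.mem_setOf_eq] at this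
        exact this hvan

lemma decomp {n : ℕ} (a : Fin n → ℝ) : ∀ k (d : Fin n → ℝ),
    Set.ncard {l | d l ≠ 0} ≤ k → (∑ l, a l * d l = 0) →
    ∃ (s : ℕ) (dv : Fin s → Fin n → ℝ), d = ∑ t, dv t ∧
      ∀ t, IsElementary a (dv t) ∧ ConformalTo (dv t) d := by
  intro k
  induction k with
  | zero =>
    intro d hcard _
    have hempty : {l | d l ≠ 0} = ∅ :=
      (Set.ncard_eq_zero (Set.toFinite _)).mp (Nat.le_zero.mp hcard)
    have hd0 : d = 0 := by
      funext l
      simp only [Pi.zero_apply]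
      by_contra h
      have hmem : l ∈ {l | d l ≠ 0} := h
      rw [hempty] at hmem
      exact hmem
    exact ⟨0, fun t => 0, by simp [hd0], fun t => t.elim0⟩
  | succ k ih =>
    intro d hcard hds
    by_cases hd0 : d = 0
    · exact ⟨0, fun t => 0, by simp [hd0], fun t => t.elim0⟩
    · obtain ⟨p, hpe, hpc, _, hdpc, hdpss⟩ := key_piece a d hd0 hds
      have hcard' : Set.ncard {l | d l - p l ≠ 0} ≤ k := by
        have := Set.ncard_lt_ncard hdpss (Set.toFinite _)
        omega
      have hdpS : ∑ l, a l * (d l - p l) = 0 := by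
        have : ∑ l, a l * (d l - p l) = (∑ l, a l * d l) - ∑ l, a l * p l := by
          rw [← Finset.sum_sub_distrib]
          apply Finset.sum_congr rfl
          intro l _; ring
        rw [this, hds, hpe.1, sub_zero]
      obtain ⟨s, dv, hdv, hdvp⟩ := ih (fun l => d l - p l) hcard' hdpS
      refine ⟨s + 1, Fin.cons p dv, ?_, ?_⟩
      · rw [Fin.sum_cons]
        funext l
        have := congrFun hdv l
        simp only [Pi.add_apply, Finset.sum_apply] at *
        linarith [this]
      · intro t
        refine Fin.cases ?_ ?_ t
        · simpa using ⟨hpe, hpc⟩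
        · intro m
          simp only [Fin.cons_succ]
          exact ⟨(hdvp m).1, conformal_trans (hdvp m).2 hdpc⟩

/-- Let `S = Null(aᵀ)` for a nonzero vector `a`. Every elementary
vector `d` of `S` has `|supp(d)| ≤ 2`; moreover, every `d ∈ S` admits a conformal
realization `d = d¹ + ⋯ + dˢ` where each `dᵗ ∈ S` is an elementary vector conformal
to `d`. -/
theorem stmt10 {n : ℕ} (a : Fin n → ℝ) (ha : a ≠ 0) :
    (∀ d : Fin n → ℝ, IsElementary a d → Set.ncard {l | d l ≠ 0} ≤ 2) ∧
    (∀ d : Fin n → ℝ, (∑ l, a l * d l = 0) →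
      ∃ (s : ℕ) (dv : Fin s → Fin n → ℝ), d = ∑ t, dv t ∧
        ∀ t, IsElementary a (dv t) ∧ ConformalTo (dv t) d) := by
  constructor
  · intro d hd
    obtain ⟨hdsum, hd0, hmin⟩ := hd
    obtain ⟨p, hpe, hpc, hpcard, _, _⟩ := key_piece a d hd0 hdsum
    have hsub : {l | p l ≠ 0} ⊆ {l | d l ≠ 0} := by
      intro l hl
      simp only [Set.mem_setOf_eq] at hl ⊢
      intro hdl
      exact hl (hpc.1 l hdl)
    have hnss : ¬ {l | p l ≠ 0} ⊂ {l | d l ≠ 0} := fun hss =>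
      hmin p hpe.1 hpe.2.1 hpc hss
    have heq : {l | p l ≠ 0} = {l | d l ≠ 0} := by
      by_contra hne
      exact hnss ⟨hsub, fun h => hne (subset_antisymm hsub h)⟩
    rw [← heq]
    exact hpcard
  · intro d hds
    exact decomp a (Set.ncard {l | d l ≠ 0}) d le_rfl hds
end
end

section
/- Let h : ℝ^n → ℝ ∪ {∞} be convex and coordinatewise separable, h(x) = Σ_{i=1}^n h_i(x_i). For any x, x + d ∈ dom h, if d = d¹ + ⋯ + d^s for some s ≥ 2 with each nonzero d^t ∈ ℝ^n conformal to d, then h(x + d) − h(x) ≥ Σ_{t=1}^s (h(x + d^t) − h(x)). -/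
open scoped BigOperators
open Finset

noncomputable section

private lemma ereal_coe_sum {α : Type*} (S : Finset α) (f : α → ℝ) :
    ((∑ a ∈ S, f a : ℝ) : EReal) = ∑ a ∈ S, (f a : EReal) :=
  map_sum (⟨⟨Real.toEReal, EReal.coe_zero⟩, EReal.coe_add⟩ : ℝ →+ EReal) f S

private lemma ereal_sum_ne_bot {α : Type*} [DecidableEq α] (S : Finset α) (f : α → EReal)
    (hf : ∀ a ∈ S, f a ≠ ⊥) : ∑ a ∈ S, f a ≠ ⊥ := by
  induction S using Finset.induction with
  | empty => simp
  | @insert a s hnot ih =>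
    rw [Finset.sum_insert hnot, Ne, EReal.add_eq_bot_iff]
    push_neg
    exact ⟨hf _ (Finset.mem_insert_self _ _),
      ih fun a ha => hf a (Finset.mem_insert_of_mem ha)⟩

private lemma ereal_term_ne_top {α : Type*} [DecidableEq α] (S : Finset α) (f : α → EReal)
    (hb : ∀ a ∈ S, f a ≠ ⊥) (ht : ∑ a ∈ S, f a ≠ ⊤) : ∀ a ∈ S, f a ≠ ⊤ := by
  intro a ha hfa
  apply ht
  rw [← Finset.add_sum_erase S f ha, hfa,
    EReal.top_add_of_ne_bot (ereal_sum_ne_bot _ _ fun b hb' => hb b (Finset.mem_of_mem_erase hb'))]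

/-- Let `h : ℝⁿ → ℝ ∪ {∞}` be convex and coordinatewise separable,
`h(x) = ∑ i, h_i(x_i)` with each `h_i : ℝ → ℝ ∪ {∞}` convex (and proper, never `−∞`).
For `x, x + d ∈ dom h`, if `d = d¹ + ⋯ + dˢ` with `s ≥ 2` and each `dᵗ` nonzero and
conformal to `d`, then `h(x + d) − h(x) ≥ ∑ t (h(x + dᵗ) − h(x))`. -/
theorem stmt11 {n : ℕ} (hi : Fin n → ℝ → EReal)
    (hbot : ∀ i r, hi i r ≠ ⊥)
    (hconv : ∀ (i : Fin n) (p q t : ℝ), 0 ≤ t → t ≤ 1 →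
      hi i (t * p + (1 - t) * q) ≤ (t : EReal) * hi i p + ((1 - t : ℝ) : EReal) * hi i q)
    (h : (Fin n → ℝ) → EReal) (hdef : ∀ x : Fin n → ℝ, h x = ∑ i, hi i (x i))
    (x d : Fin n → ℝ) (hx : h x ≠ ⊤) (hxd : h (x + d) ≠ ⊤)
    (s : ℕ) (hs : 2 ≤ s) (dv : Fin s → Fin n → ℝ)
    (hsum : d = ∑ t, dv t) (hnz : ∀ t, dv t ≠ 0) (hcf : ∀ t, ConformalTo (dv t) d) :
    ∑ t, (h (x + dv t) - h x) ≤ h (x + d) - h x := by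
  classical
  -- coordinate values of d:  d i = ∑ t, dv t i
  have hdi : ∀ i, d i = ∑ t, dv t i := by
    intro i; rw [hsum]; simp
  -- finiteness at x and x+d
  have hxS : (∑ i, hi i (x i)) ≠ ⊤ := by rw [← hdef]; exact hx
  have hxdS : (∑ i, hi i (x i + d i)) ≠ ⊤ := by
    rw [← hdef]
    convert hxd using 2
    rfl
  have hAtop : ∀ i, hi i (x i) ≠ ⊤ :=
    fun i => ereal_term_ne_top univ _ (fun a _ => hbot a _) hxS i (mem_univ i)
  have hBtop : ∀ i, hi i (x i + d i) ≠ ⊤ :=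
    fun i => ereal_term_ne_top univ _ (fun a _ => hbot a _) hxdS i (mem_univ i)
  set A : Fin n → ℝ := fun i => (hi i (x i)).toReal with hA
  set B : Fin n → ℝ := fun i => (hi i (x i + d i)).toReal with hB
  have hAc : ∀ i, hi i (x i) = ((A i : ℝ) : EReal) :=
    fun i => (EReal.coe_toReal (hAtop i) (hbot i _)).symm
  have hBc : ∀ i, hi i (x i + d i) = ((B i : ℝ) : EReal) :=
    fun i => (EReal.coe_toReal (hBtop i) (hbot i _)).symm
  -- the weights
  set lam : Fin s → Fin n → ℝ :=
    fun t i => if d i = 0 then 0 else dv t i * d i / (d i * d i) with hlam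
  have hlam_mul : ∀ t i, lam t i * d i = dv t i := by
    intro t i
    by_cases hd : d i = 0
    · simp [hlam, hd, (hcf t).1 i hd]
    · simp only [hlam, hd, if_false]
      rw [div_mul_eq_mul_div, div_eq_iff (mul_ne_zero hd hd)]
      ring
  have hlam0 : ∀ t i, 0 ≤ lam t i := by
    intro t i
    by_cases hd : d i = 0
    · simp [hlam, hd]
    · simp only [hlam, hd, if_false]
      exact div_nonneg ((hcf t).2 i) (mul_self_nonneg _)
  have hlam1 : ∀ t i, lam t i ≤ 1 := by
    intro t i
    by_cases hd : d i = 0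
    · simp [hlam, hd]
    · simp only [hlam, hd, if_false]
      rw [div_le_one (mul_self_pos.mpr hd)]
      have hrest : 0 ≤ ∑ t' ∈ univ.erase t, dv t' i * d i :=
        Finset.sum_nonneg fun t' _ => (hcf t').2 i
      have hsplit : dv t i * d i + ∑ t' ∈ univ.erase t, dv t' i * d i = d i * d i := by
        rw [Finset.add_sum_erase _ (fun t' => dv t' i * d i) (mem_univ t),
          ← Finset.sum_mul, ← hdi]
      linarith
  have hlamsum : ∀ i, d i ≠ 0 → ∑ t, lam t i = 1 := by
    intro i hd
    simp only [hlam, hd, if_false]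
    rw [← Finset.sum_div, ← Finset.sum_mul, ← hdi, div_self (mul_ne_zero hd hd)]
  -- convexity bound in EReal for each t, i
  have key : ∀ t i, hi i (x i + dv t i) ≤
      ((lam t i * B i + (1 - lam t i) * A i : ℝ) : EReal) := by
    intro t i
    have := hconv i (x i + d i) (x i) (lam t i) (hlam0 t i) (hlam1 t i)
    have harg : lam t i * (x i + d i) + (1 - lam t i) * x i = x i + dv t i := by
      nlinarith [hlam_mul t i]
    rw [harg, hAc, hBc] at this
    calc hi i (x i + dv t i)
        ≤ (lam t i : EReal) * (B i : EReal) + ((1 - lam t i : ℝ) : EReal) * (A i : EReal) :=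
          this
      _ = ((lam t i * B i + (1 - lam t i) * A i : ℝ) : EReal) := by
          rw [EReal.coe_add, EReal.coe_mul, EReal.coe_mul]
  -- hence each hi i (x i + dv t i) is finite
  have hCtop : ∀ t i, hi i (x i + dv t i) ≠ ⊤ := by
    intro t i heq
    exact EReal.coe_ne_top _ (top_le_iff.mp (heq ▸ key t i))
  set C : Fin s → Fin n → ℝ := fun t i => (hi i (x i + dv t i)).toReal with hC
  have hCc : ∀ t i, hi i (x i + dv t i) = ((C t i : ℝ) : EReal) :=
    fun t i => (EReal.coe_toReal (hCtop t i) (hbot i _)).symm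
  have hCle : ∀ t i, C t i ≤ lam t i * B i + (1 - lam t i) * A i := by
    intro t i
    have := key t i
    rw [hCc t i] at this
    exact_mod_cast this
  -- per-coordinate real inequality
  have coord : ∀ i, ∑ t, C t i ≤ B i + ((s : ℝ) - 1) * A i := by
    intro i
    by_cases hd : d i = 0
    · have hBA : B i = A i := by rw [hB, hA]; simp [hd]
      have hCA : ∀ t, C t i ≤ A i := by
        intro t
        have hl0 : lam t i = 0 := by simp [hlam, hd]
        have := hCle t i
        rw [hl0, hBA] at this
        linarith
      calc ∑ t, C t i ≤ ∑ _t : Fin s, A i := Finset.sum_le_sum fun t _ => hCA t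
        _ = (s : ℝ) * A i := by simp [mul_comm]
        _ = B i + ((s : ℝ) - 1) * A i := by rw [hBA]; ring
    · calc ∑ t, C t i ≤ ∑ t, (lam t i * B i + (1 - lam t i) * A i) :=
            Finset.sum_le_sum fun t _ => hCle t i
        _ = (∑ t, lam t i) * B i + ((s : ℝ) - (∑ t, lam t i)) * A i := by
            have hone : ∑ _t : Fin s, (1 : ℝ) = (s : ℝ) := by simp
            rw [Finset.sum_add_distrib, ← Finset.sum_mul, ← Finset.sum_mul,
              Finset.sum_sub_distrib, hone]
        _ = B i + ((s : ℝ) - 1) * A i := by rw [hlamsum i hd]; ring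
  -- rewrite everything through real coercions
  have hhx : h x = ((∑ i, A i : ℝ) : EReal) := by
    rw [hdef, ereal_coe_sum]
    exact Finset.sum_congr rfl fun i _ => hAc i
  have hhxd : h (x + d) = ((∑ i, B i : ℝ) : EReal) := by
    rw [hdef, ereal_coe_sum]
    exact Finset.sum_congr rfl fun i _ => hBc i
  have hhxt : ∀ t, h (x + dv t) = ((∑ i, C t i : ℝ) : EReal) := by
    intro t
    rw [hdef, ereal_coe_sum]
    exact Finset.sum_congr rfl fun i _ => hCc t i
  rw [hhx, hhxd]
  calc ∑ t, (h (x + dv t) - ((∑ i, A i : ℝ) : EReal))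
      = ((∑ t, ((∑ i, C t i) - ∑ i, A i) : ℝ) : EReal) := by
        rw [ereal_coe_sum univ (fun t => (∑ i, C t i) - ∑ i, A i)]
        refine Finset.sum_congr rfl fun t _ => ?_
        rw [hhxt t, ← EReal.coe_sub]
    _ ≤ ((((∑ i, B i) - ∑ i, A i) : ℝ) : EReal) := by
        rw [EReal.coe_le_coe_iff]
        have h1 : ∑ t, ((∑ i, C t i) - ∑ i, A i)
            = (∑ i, ∑ t, C t i) - (s : ℝ) * ∑ i, A i := by
          rw [Finset.sum_sub_distrib, Finset.sum_comm]
          simp [mul_comm]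
        rw [h1]
        have h2 : ∑ i, ∑ t, C t i ≤ ∑ i, (B i + ((s : ℝ) - 1) * A i) :=
          Finset.sum_le_sum fun i _ => coord i
        rw [Finset.sum_add_distrib, ← Finset.mul_sum] at h2
        linarith
    _ = ((∑ i, B i : ℝ) : EReal) - ((∑ i, A i : ℝ) : EReal) := by rw [EReal.coe_sub]
end
end

section
/- For the 2-random coordinate descent method on the linearly constrained problem min{F(x) = f(x) + h(x) : aᵀx = b}, the descent inequality F(x^{k+1}) ≤ F(x^k) − (L_{i_k j_k}/2)‖d_{i_k j_k}‖² holds for all k ≥ 0, where d_{i_k j_k} minimizes the 2-block quadratic model f(x^k) + ⟨∇_{i_k j_k} f(x^k), s⟩ + (L_{i_k j_k}/2)‖s‖² + h(x^k + s) subject to a_{i_k}ᵀ s_{i_k} + a_{j_k}ᵀ s_{j_k} = 0. -/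
open scoped BigOperators RealInnerProductSpace
open Finset Filter
open scoped Topology

noncomputable section

lemma inner_blockProj_pair {n N : ℕ} (blk : Fin n → Fin N) (i j : Fin N) (hij : i ≠ j)
    (u d : En n) (hd : ∀ l, blk l ≠ i → blk l ≠ j → d l = 0) :
    ⟪blockProj blk i u + blockProj blk j u, d⟫ = ⟪u, d⟫ := by
  simp only [PiLp.inner_apply, RCLike.inner_apply, conj_trivial]
  refine Finset.sum_congr rfl fun l _ => ?_
  simp only [PiLp.add_apply, blockProj]
  by_cases h1 : blk l = i
  · simp [h1]
    exact Or.inl fun heq => absurd heq hij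
  · by_cases h2 : blk l = j
    · simp [h1, h2]
      exact Or.inl fun (heq : j = i) => absurd heq.symm hij
    · simp [h1, h2, hd l h1 h2]

lemma descent_aux {n N : ℕ} (blk : Fin n → Fin N) (i j : Fin N) (hij : i ≠ j)
    (f : En n → ℝ) (g : En n → En n) (hg : ∀ x, HasGradientAt f (g x) x)
    (Lij : ℝ) (hLij : 0 < Lij)
    (hlip : ∀ (x s : En n), (∀ l, blk l ≠ i → blk l ≠ j → s l = 0) →
      ‖(blockProj blk i (g (x + s)) + blockProj blk j (g (x + s))) -
        (blockProj blk i (g x) + blockProj blk j (g x))‖ ≤ Lij * ‖s‖)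
    (x d : En n) (hdsupp : ∀ l, blk l ≠ i → blk l ≠ j → d l = 0) :
    f (x + d) ≤ f x + ⟪g x, d⟫ + Lij / 2 * ‖d‖ ^ 2 := by
  -- derivative of f along the line t ↦ x + t • d
  have hline : ∀ t : ℝ, HasDerivAt (fun t : ℝ => x + t • d) d t := by
    intro t
    simpa using ((hasDerivAt_id t).smul_const d).const_add x
  have hφ : ∀ t : ℝ, HasDerivAt (fun t : ℝ => f (x + t • d)) ⟪g (x + t • d), d⟫ t := by
    intro t
    have hF := (hasGradientAt_iff_hasFDerivAt.mp (hg (x + t • d)))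
    have := hF.comp_hasDerivAt t (hline t)
    exact this
  set ψ : ℝ → ℝ := fun t => f (x + t • d) - t * ⟪g x, d⟫ - Lij / 2 * t ^ 2 * ‖d‖ ^ 2 with hψdef
  have hψ : ∀ t : ℝ, HasDerivAt ψ
      (⟪g (x + t • d), d⟫ - ⟪g x, d⟫ - Lij * t * ‖d‖ ^ 2) t := by
    intro t
    have h1 : HasDerivAt (fun t : ℝ => t * ⟪g x, d⟫) ⟪g x, d⟫ t := hasDerivAt_mul_const _
    have h2 : HasDerivAt (fun t : ℝ => Lij / 2 * t ^ 2 * ‖d‖ ^ 2)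
        (Lij / 2 * (2 * t) * ‖d‖ ^ 2) t := by
      have := (hasDerivAt_pow 2 t).const_mul (Lij / 2)
      have := this.mul_const (‖d‖ ^ 2)
      simpa [mul_comm, mul_assoc, mul_left_comm] using this
    have := ((hφ t).sub h1).sub h2
    refine this.congr_deriv ?_
    ring
  -- the derivative of ψ is nonpositive on [0,1]
  have hkey : ∀ t ∈ Set.Icc (0:ℝ) 1, ⟪g (x + t • d), d⟫ - ⟪g x, d⟫ ≤ Lij * t * ‖d‖ ^ 2 := by
    intro t ht
    have hsupp : ∀ l, blk l ≠ i → blk l ≠ j → (t • d) l = 0 := by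
      intro l h1 h2
      have : (t • d) l = t * d l := rfl
      rw [this, hdsupp l h1 h2, mul_zero]
    have hw := hlip x (t • d) hsupp
    have hnorm : ‖t • d‖ = t * ‖d‖ := by
      rw [norm_smul, Real.norm_eq_abs, abs_of_nonneg ht.1]
    set w := (blockProj blk i (g (x + t • d)) + blockProj blk j (g (x + t • d))) -
        (blockProj blk i (g x) + blockProj blk j (g x)) with hwdef
    have e1 := inner_blockProj_pair blk i j hij (g (x + t • d)) d hdsupp
    have e2 := inner_blockProj_pair blk i j hij (g x) d hdsupp
    have einner : ⟪w, d⟫ = ⟪g (x + t • d), d⟫ - ⟪g x, d⟫ := by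
      rw [hwdef, inner_sub_left, e1, e2]
    rw [← einner]
    calc ⟪w, d⟫ ≤ ‖w‖ * ‖d‖ := real_inner_le_norm w d
    _ ≤ Lij * ‖t • d‖ * ‖d‖ := by
        apply mul_le_mul_of_nonneg_right hw (norm_nonneg d)
    _ = Lij * t * ‖d‖ ^ 2 := by rw [hnorm]; ring
  have hanti : AntitoneOn ψ (Set.Icc (0:ℝ) 1) := by
    apply antitoneOn_of_deriv_nonpos (convex_Icc 0 1)
    · exact fun t _ => ((hψ t).differentiableAt.continuousAt).continuousWithinAt
    · exact fun t _ => (hψ t).differentiableAt.differentiableWithinAt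
    · intro t ht
      rw [interior_Icc] at ht
      rw [(hψ t).deriv]
      have := hkey t ⟨le_of_lt ht.1, le_of_lt ht.2⟩
      linarith
  have h01 := hanti (Set.left_mem_Icc.mpr zero_le_one) (Set.right_mem_Icc.mpr zero_le_one)
      zero_le_one
  have hψ0 : ψ 0 = f x := by simp [hψdef]
  have hψ1 : ψ 1 = f (x + d) - ⟪g x, d⟫ - Lij / 2 * ‖d‖ ^ 2 := by simp [hψdef]
  rw [hψ0, hψ1] at h01
  linarith


/-- Descent inequality for one step of the 2-random coordinate descent
method on `min {F(x) = f(x) + h(x) : aᵀx = b}`.  If `d` is supported on the pair of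
blocks `(i, j)`, satisfies the constraint `a_iᵀ d_i + a_jᵀ d_j = 0` (i.e. `⟨a, d⟩ = 0`)
and minimizes the 2-block quadratic model
`s ↦ f(x) + ⟨∇_{ij} f(x), s⟩ + (L_{ij}/2)‖s‖² + h(x + s)` over such `s`, then
`F(x + d) ≤ F(x) − (L_{ij}/2)‖d‖²`. -/
theorem stmt12 {n N : ℕ} (blk : Fin n → Fin N) (i j : Fin N) (hij : i ≠ j)
    (f h : En n → ℝ) (g : En n → En n) (hg : ∀ x, HasGradientAt f (g x) x)
    (Lij : ℝ) (hLij : 0 < Lij)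
    (hlip : ∀ (x s : En n), (∀ l, blk l ≠ i → blk l ≠ j → s l = 0) →
      ‖(blockProj blk i (g (x + s)) + blockProj blk j (g (x + s))) -
        (blockProj blk i (g x) + blockProj blk j (g x))‖ ≤ Lij * ‖s‖)
    (Hc : Fin n → ℝ → ℝ) (hHconv : ∀ l, ConvexOn ℝ Set.univ (Hc l))
    (hsep : ∀ x : En n, h x = ∑ l, Hc l (x l)) (hcont : Continuous h)
    (a : En n) (ha : a ≠ 0) (b : ℝ)
    (x : En n) (hx : ⟪a, x⟫ = b)
    (d : En n) (hdsupp : ∀ l, blk l ≠ i → blk l ≠ j → d l = 0) (hdfeas : ⟪a, d⟫ = 0)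
    (hdmin : ∀ s : En n, (∀ l, blk l ≠ i → blk l ≠ j → s l = 0) → ⟪a, s⟫ = 0 →
      f x + ⟪g x, d⟫ + Lij / 2 * ‖d‖ ^ 2 + h (x + d) ≤
      f x + ⟪g x, s⟫ + Lij / 2 * ‖s‖ ^ 2 + h (x + s)) :
    f (x + d) + h (x + d) ≤ (f x + h x) - Lij / 2 * ‖d‖ ^ 2 := by
  have hdesc := descent_aux blk i j hij f g hg Lij hLij hlip x d hdsupp
  set G := ⟪g x, d⟫ with hG
  set Q := ‖d‖ ^ 2 with hQ
  have hQ0 : 0 ≤ Q := by positivity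
  -- key inequality via minimality along the segment (1 - t) • d
  have hper : ∀ t ∈ Set.Ioo (0:ℝ) 1,
      G + Lij * Q + h (x + d) ≤ h x + Lij / 2 * t * Q := by
    intro t ht
    set s : En n := (1 - t) • d with hs
    have hssupp : ∀ l, blk l ≠ i → blk l ≠ j → s l = 0 := by
      intro l h1 h2
      have : s l = (1 - t) * d l := rfl
      rw [this, hdsupp l h1 h2, mul_zero]
    have hsfeas : ⟪a, s⟫ = 0 := by
      rw [hs, real_inner_smul_right, hdfeas, mul_zero]
    have hm := hdmin s hssupp hsfeas
    have hGs : ⟪g x, s⟫ = (1 - t) * G := by rw [hs, real_inner_smul_right]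
    have hns : ‖s‖ ^ 2 = (1 - t) ^ 2 * Q := by
      rw [hs, norm_smul, Real.norm_eq_abs, abs_of_nonneg (by linarith [ht.2] : (0:ℝ) ≤ 1 - t)]
      ring
    -- convexity of h gives h (x + s) ≤ (1-t) h (x+d) + t h x
    have hh : h (x + s) ≤ (1 - t) * h (x + d) + t * h x := by
      rw [hsep (x + s), hsep (x + d), hsep x]
      have hpt : ∀ l : Fin n, Hc l ((x + s) l) ≤ (1 - t) * Hc l ((x + d) l) + t * Hc l (x l) := by
        intro l
        have hc := (hHconv l).2 (Set.mem_univ ((x + d) l)) (Set.mem_univ (x l))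
          (by linarith [ht.2] : (0:ℝ) ≤ 1 - t) (le_of_lt ht.1) (by ring)
        have harg : (x + s) l = (1 - t) * ((x + d) l) + t * (x l) := by
          show x l + (1 - t) * d l = (1 - t) * (x l + d l) + t * (x l)
          ring
        rw [harg]
        simpa [smul_eq_mul] using hc
      calc ∑ l, Hc l ((x + s) l)
          ≤ ∑ l, ((1 - t) * Hc l ((x + d) l) + t * Hc l (x l)) :=
            Finset.sum_le_sum (fun l _ => hpt l)
        _ = (1 - t) * ∑ l, Hc l ((x + d) l) + t * ∑ l, Hc l (x l) := by
            rw [Finset.sum_add_distrib, Finset.mul_sum, Finset.mul_sum]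
    rw [hGs, hns] at hm
    have h2 : t * (G + Lij / 2 * (2 - t) * Q + h (x + d) - h x) ≤ 0 := by nlinarith [hm, hh]
    have h3 : G + Lij / 2 * (2 - t) * Q + h (x + d) - h x ≤ 0 := by
      by_contra hcon
      push_neg at hcon
      exact absurd h2 (not_le.mpr (mul_pos ht.1 hcon))
    nlinarith [h3]
  have hkey : G + Lij * Q + h (x + d) ≤ h x := by
    have htend : Tendsto (fun t : ℝ => h x + Lij / 2 * t * Q) (𝓝[>] (0:ℝ)) (𝓝 (h x)) := by
      have : Tendsto (fun t : ℝ => h x + Lij / 2 * t * Q) (𝓝 (0:ℝ))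
          (𝓝 (h x + Lij / 2 * 0 * Q)) := by
        apply Tendsto.const_add
        exact (tendsto_id.const_mul (Lij / 2)).mul_const Q
      simpa using this.mono_left nhdsWithin_le_nhds
    refine ge_of_tendsto htend ?_
    filter_upwards [Ioo_mem_nhdsGT_of_mem (Set.mem_Ico.mpr ⟨le_refl 0, zero_lt_one⟩)] with t ht
    exact hper t ht
  linarith [hdesc, hkey]
end
end

section
/- Let x be feasible for aᵀx = b and let (i,j) be chosen uniformly among the N(N−1)/2 unordered block pairs. If d_{ij} minimizes the 2-block quadratic model with constant L_{ij} over S_{ij} = {s ∈ S : s_l = 0 for l ≠ i, j}, then E[ψ_{L_{ij}·1}(d_{ij}; x)] ≤ (1 − 2/(N(N−1))) F(x) + (2/(N(N−1))) ψ_{NΓ}(d_{NΓ}(x); x), where Γ_i = (1/N) Σ_{j=1}^N L_{ij} and d_{NΓ}(x) minimizes ψ_{NΓ}(·; x) over S = {s : aᵀs = 0}. -/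
open scoped BigOperators RealInnerProductSpace
open Finset Filter

noncomputable section

/-- `e` is conformal to `d`. -/
def Conf {n : ℕ} (d e : En n) : Prop := ∀ l, 0 ≤ e l * d l ∧ |e l| ≤ |d l|

lemma inner_expand {n : ℕ} (a d : En n) : ⟪a, d⟫ = ∑ l, a l * d l := by
  simp [PiLp.inner_apply, RCLike.inner_apply, mul_comm]

lemma conf_real {r u : ℝ} (h1 : 0 ≤ u * r) (h2 : |u| ≤ |r|) :
    0 ≤ (r - u) * r ∧ |r - u| ≤ |r| := by
  constructor
  · rcases abs_cases u with ⟨hu1, hu2⟩ | ⟨hu1, hu2⟩ <;>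
      rcases abs_cases r with ⟨hr1, hr2⟩ | ⟨hr1, hr2⟩ <;> nlinarith
  · rw [abs_le]
    rcases abs_cases u with ⟨hu1, hu2⟩ | ⟨hu1, hu2⟩ <;>
      rcases abs_cases r with ⟨hr1, hr2⟩ | ⟨hr1, hr2⟩ <;> constructor <;> nlinarith

lemma conf_trans {n : ℕ} {d d' e : En n} (h1 : Conf d d') (h2 : Conf d' e) : Conf d e := by
  intro l
  obtain ⟨h1a, h1b⟩ := h1 l
  obtain ⟨h2a, h2b⟩ := h2 l
  refine ⟨?_, h2b.trans h1b⟩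
  rcases eq_or_ne (d' l) 0 with hz | hz
  · have he : e l = 0 := by
      rw [hz] at h2b; simpa using abs_nonpos_iff.mp (by simpa using h2b)
    simp [he]
  · have hsq : 0 < (d' l) ^ 2 := by positivity
    nlinarith [mul_nonneg h2a h1a]

lemma conf_sub {n : ℕ} {d e : En n} (h : Conf d e) : Conf d (d - e) := by
  intro l
  obtain ⟨h1, h2⟩ := h l
  have := conf_real h1 h2
  simpa using this

lemma exists_pos_of_sum_zero {n : ℕ} (w : Fin n → ℝ) (hsum : ∑ l, w l = 0)
    {l0 : Fin n} (hl0 : w l0 < 0) : ∃ lp, 0 < w lp := by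
  by_contra hc
  push_neg at hc
  have h1 : ∑ l ∈ Finset.univ.erase l0, w l ≤ 0 :=
    Finset.sum_nonpos fun l _ => hc l
  have h2 : w l0 + ∑ l ∈ Finset.univ.erase l0, w l = 0 := by
    rw [Finset.add_sum_erase _ _ (Finset.mem_univ l0)]; exact hsum
  linarith

lemma decomp_s13 {n : ℕ} (a : En n) :
    ∀ (k : ℕ) (d : En n), (Finset.univ.filter (fun l => d l ≠ 0)).card ≤ k → ⟪a, d⟫ = 0 →
    ∃ (m : ℕ) (e : Fin m → En n) (l1 l2 : Fin m → Fin n),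
      (∀ t, ⟪a, e t⟫ = 0) ∧
      (∀ t l, l ≠ l1 t → l ≠ l2 t → e t l = 0) ∧
      (∑ t, e t) = d ∧
      (∀ t, Conf d (e t)) := by
  intro k
  induction k with
  | zero =>
    intro d hcard hfeas
    have hd : d = 0 := by
      ext l
      by_contra hl
      have hmem : l ∈ Finset.univ.filter (fun l => d l ≠ 0) := by
        simp only [Finset.mem_filter, Finset.mem_univ, true_and]
        simpa using hl
      have := Finset.card_pos.mpr ⟨l, hmem⟩
      omega
    exact ⟨0, Fin.elim0, Fin.elim0, Fin.elim0, fun t => t.elim0, fun t => t.elim0,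
      by simp [hd], fun t => t.elim0⟩
  | succ k ih =>
    intro d hcard hfeas
    by_cases hd0 : d = 0
    · exact ⟨0, Fin.elim0, Fin.elim0, Fin.elim0, fun t => t.elim0, fun t => t.elim0,
        by simp [hd0], fun t => t.elim0⟩
    have hw : ∑ l, a l * d l = 0 := by rw [← inner_expand]; exact hfeas
    -- construct one elementary step
    obtain ⟨e, l1, l2, lrm, hinner, hsupp, hconf, hrm0, hrmne⟩ :
        ∃ (e : En n) (l1 l2 lrm : Fin n), ⟪a, e⟫ = 0 ∧
          (∀ l, l ≠ l1 → l ≠ l2 → e l = 0) ∧ Conf d e ∧ (d - e) lrm = 0 ∧ d lrm ≠ 0 := by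
      by_cases hA : ∃ l, d l ≠ 0 ∧ a l = 0
      · obtain ⟨l0', hd0', ha0'⟩ := hA
        refine ⟨EuclideanSpace.single l0' (d l0'), l0', l0', l0', ?_, ?_, ?_, ?_, hd0'⟩
        · rw [inner_expand]
          rw [Finset.sum_eq_single l0']
          · simp [ha0']
          · intro l _ hl
            simp [EuclideanSpace.single_apply, hl]
          · intro hmem; exact absurd (Finset.mem_univ l0') hmem
        · intro l hl _
          simp [EuclideanSpace.single_apply, hl]
        · intro l
          by_cases hl : l = l0'
          · rw [hl]
            simp [EuclideanSpace.single_apply, mul_self_nonneg]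
          · simp [EuclideanSpace.single_apply, hl]
        · simp [EuclideanSpace.single_apply]
      · push_neg at hA
        obtain ⟨l0, hl0⟩ : ∃ l, d l ≠ 0 := by
          by_contra hc
          push_neg at hc
          exact hd0 (by ext l; simpa using hc l)
        set w : Fin n → ℝ := fun l => a l * d l with hwdef
        have hwl0 : w l0 ≠ 0 := mul_ne_zero (hA l0 hl0) hl0
        have hex_neg : ∃ lm, w lm < 0 := by
          rcases hwl0.lt_or_gt with hlt | hgt
          · exact ⟨l0, hlt⟩
          · obtain ⟨lm, hlm⟩ := exists_pos_of_sum_zero (fun l => -(w l))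
              (by rw [show (∑ l, (fun l => -(w l)) l) = -∑ l, w l from by simp, hw, neg_zero])
              (l0 := l0) (by simpa using hgt)
            exact ⟨lm, by simpa using hlm⟩
        obtain ⟨lm, hwm⟩ := hex_neg
        obtain ⟨lp, hwp⟩ := exists_pos_of_sum_zero w hw hwm
        have hlpm : lp ≠ lm := by rintro rfl; linarith
        have hAne : a lp ≠ 0 := fun hc => by simp [hwdef, hc] at hwp
        have hBne : a lm ≠ 0 := fun hc => by simp [hwdef, hc] at hwm
        have hdp : d lp ≠ 0 := fun hc => by simp [hwdef, hc] at hwp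
        have hdm : d lm ≠ 0 := fun hc => by simp [hwdef, hc] at hwm
        set c : ℝ := min (w lp) (-(w lm)) with hmdef
        have hm : 0 < c := lt_min hwp (by linarith)
        set e : En n := EuclideanSpace.single lp (c / a lp) +
          EuclideanSpace.single lm (-(c / a lm)) with hedef
        have helip : e lp = c / a lp := by
          simp [hedef, EuclideanSpace.single_apply, hlpm]
        have helim : e lm = -(c / a lm) := by
          simp [hedef, EuclideanSpace.single_apply, hlpm.symm]
        have hel : ∀ l, l ≠ lp → l ≠ lm → e l = 0 := by
          intro l h1 h2
          simp [hedef, EuclideanSpace.single_apply, h1, h2]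
        have hconf_lp : 0 ≤ e lp * d lp ∧ |e lp| ≤ |d lp| := by
          rw [helip]
          constructor
          · have heq : (c / a lp) * d lp = c * (a lp * d lp) / (a lp) ^ 2 := by
              rw [div_mul_eq_mul_div, div_eq_div_iff hAne (pow_ne_zero 2 hAne)]
              ring
            rw [heq]
            exact div_nonneg (le_of_lt (mul_pos hm hwp)) (sq_nonneg _)
          · rw [abs_div, div_le_iff₀ (abs_pos.mpr hAne), abs_of_pos hm, ← abs_mul]
            have habs : |d lp * a lp| = a lp * d lp := by
              rw [mul_comm]; exact abs_of_pos hwp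
            rw [habs]; exact min_le_left _ _
        have hconf_lm : 0 ≤ e lm * d lm ∧ |e lm| ≤ |d lm| := by
          rw [helim]
          constructor
          · have heq : (-(c / a lm)) * d lm = c * (-(a lm * d lm)) / (a lm) ^ 2 := by
              rw [neg_mul, div_mul_eq_mul_div, ← neg_div, div_eq_div_iff hBne (pow_ne_zero 2 hBne)]
              ring
            rw [heq]
            exact div_nonneg (le_of_lt (mul_pos hm (neg_pos.mpr hwm))) (sq_nonneg _)
          · rw [abs_neg, abs_div, div_le_iff₀ (abs_pos.mpr hBne), abs_of_pos hm, ← abs_mul]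
            have habs : |d lm * a lm| = -(a lm * d lm) := by
              rw [mul_comm]; exact abs_of_neg hwm
            rw [habs]; exact min_le_right _ _
        have hconfe : Conf d e := by
          intro l
          by_cases h1 : l = lp
          · rw [h1]; exact hconf_lp
          · by_cases h2 : l = lm
            · rw [h2]; exact hconf_lm
            · rw [hel l h1 h2]; simp
        have hinner : ⟪a, e⟫ = 0 := by
          rw [inner_expand]
          have ht1 : a lp * e lp = c := by
            rw [helip, mul_div_cancel₀ _ hAne]
          have ht2 : a lm * e lm = -c := by
            rw [helim, mul_neg, mul_div_cancel₀ _ hBne]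
          have hterm : ∀ l, a l * e l =
              (if l = lp then c else 0) + (if l = lm then -c else 0) := by
            intro l
            by_cases h1 : l = lp
            · rw [h1, ht1]; simp [hlpm]
            · by_cases h2 : l = lm
              · rw [h2, ht2]; simp [h1, hlpm.symm, (show lm ≠ lp from fun hc => hlpm hc.symm)]
              · rw [hel l h1 h2]; simp [h1, h2]
          rw [Finset.sum_congr rfl (fun l _ => hterm l), Finset.sum_add_distrib]
          simp
        rcases le_total (w lp) (-(w lm)) with hmin | hmin
        · refine ⟨e, lp, lm, lp, hinner, hel, hconfe, ?_, hdp⟩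
          have hlast : e lp = d lp := by
            rw [helip, hmdef, min_eq_left hmin, hwdef]
            exact mul_div_cancel_left₀ _ hAne
          simp [hlast]
        · refine ⟨e, lp, lm, lm, hinner, hel, hconfe, ?_, hdm⟩
          have hlast : e lm = d lm := by
            rw [helim, hmdef, min_eq_right hmin, hwdef]
            rw [neg_div, neg_neg]
            exact mul_div_cancel_left₀ _ hBne
          simp [hlast]
    have hconf' : Conf d (d - e) := conf_sub hconf
    have hfeas' : ⟪a, d - e⟫ = 0 := by rw [inner_sub_right, hfeas, hinner, sub_zero]
    have hcard' : (Finset.univ.filter (fun l => (d - e) l ≠ 0)).card ≤ k := by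
      have hsub : Finset.univ.filter (fun l => (d - e) l ≠ 0) ⊆
          (Finset.univ.filter (fun l => d l ≠ 0)).erase lrm := by
        intro l hl
        simp only [Finset.mem_filter, Finset.mem_univ, true_and] at hl
        rw [Finset.mem_erase]
        constructor
        · rintro rfl; exact hl hrm0
        · simp only [Finset.mem_filter, Finset.mem_univ, true_and]
          intro hdl
          apply hl
          have := (hconf' l).2
          rw [hdl] at this
          simpa using abs_nonpos_iff.mp (by simpa using this)
      have h1 := Finset.card_le_card hsub
      have h2 : lrm ∈ Finset.univ.filter (fun l => d l ≠ 0) := by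
        simp only [Finset.mem_filter, Finset.mem_univ, true_and]; exact hrmne
      have h3 := Finset.card_erase_of_mem h2
      omega
    obtain ⟨m, e', l1', l2', hinner', hsupp', hsum', hconf''⟩ := ih (d - e) hcard' hfeas'
    refine ⟨m + 1, Fin.cons e e', Fin.cons l1 l1', Fin.cons l2 l2', ?_, ?_, ?_, ?_⟩
    · intro t
      refine Fin.cases ?_ ?_ t
      · simpa using hinner
      · intro t'; simpa using hinner' t'
    · intro t
      refine Fin.cases ?_ ?_ t
      · simpa using hsupp
      · intro t'; simpa using hsupp' t'
    · rw [Fin.sum_univ_succ]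
      simp only [Fin.cons_zero, Fin.cons_succ]
      rw [hsum']
      abel
    · intro t
      refine Fin.cases ?_ ?_ t
      · simpa using hconf
      · intro t'
        have := conf_trans hconf' (hconf'' t')
        simpa using this

lemma norm_sq_eq {n : ℕ} (y : En n) : ‖y‖ ^ 2 = ∑ l, (y l) ^ 2 := by
  rw [EuclideanSpace.norm_eq, Real.sq_sqrt (by positivity)]
  simp

lemma blockNormSq_eq {n N : ℕ} (blk : Fin n → Fin N) (Γ : Fin N → ℝ) (y : En n) :
    blockNormSq blk Γ y = ∑ l, Γ (blk l) * (y l) ^ 2 := by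
  unfold blockNormSq
  calc ∑ i, Γ i * ‖blockProj blk i y‖ ^ 2
      = ∑ i, ∑ l, (if blk l = i then Γ i * (y l) ^ 2 else 0) := by
        refine Finset.sum_congr rfl fun i _ => ?_
        rw [norm_sq_eq, Finset.mul_sum]
        refine Finset.sum_congr rfl fun l _ => ?_
        by_cases hbl : blk l = i <;> simp [blockProj, hbl]
    _ = ∑ l, ∑ i, (if blk l = i then Γ i * (y l) ^ 2 else 0) := Finset.sum_comm
    _ = ∑ l, Γ (blk l) * (y l) ^ 2 := by
        refine Finset.sum_congr rfl fun l _ => ?_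
        rw [Finset.sum_ite_eq _ (blk l) (fun i => Γ i * (y l) ^ 2)]
        simp


theorem card_lt_pairs (N : ℕ) :
    ((Finset.univ.filter (fun p : Fin N × Fin N => p.1 < p.2)).card : ℕ) * 2 + N = N * N := by
  have hsw : (Finset.univ.filter (fun p : Fin N × Fin N => p.1 < p.2)).card =
      (Finset.univ.filter (fun p : Fin N × Fin N => p.2 < p.1)).card := by
    apply Finset.card_bij' (fun p _ => Prod.swap p) (fun p _ => Prod.swap p) <;>
      intro p hp <;> simp_all
  have h1 := Finset.card_filter_add_card_filter_not
    (s := (Finset.univ : Finset (Fin N × Fin N))) (p := fun p => p.1 < p.2)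
  have h2 : (Finset.univ.filter (fun p : Fin N × Fin N => ¬ p.1 < p.2)).card =
      (Finset.univ.filter (fun p : Fin N × Fin N => p.2 < p.1)).card + N := by
    have he : (Finset.univ.filter (fun p : Fin N × Fin N => ¬ p.1 < p.2)) =
        (Finset.univ.filter (fun p : Fin N × Fin N => p.2 < p.1)) ∪
        (Finset.univ.filter (fun p : Fin N × Fin N => p.1 = p.2)) := by
      ext p; simp [not_lt, le_iff_lt_or_eq, eq_comm, or_comm]
    rw [he, Finset.card_union_of_disjoint]
    · congr 1
      have : (Finset.univ.filter (fun p : Fin N × Fin N => p.1 = p.2)) =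
          (Finset.univ : Finset (Fin N)).diag := by
        ext p; simp [Finset.mem_diag]
      rw [this, Finset.diag_card]; simp
    · rw [Finset.disjoint_filter]
      intro p _ hlt heq
      rw [heq] at hlt; exact lt_irrefl _ hlt
  have h3 : (Finset.univ : Finset (Fin N × Fin N)).card = N * N := by simp
  omega


/-- One-step expectation bound for the 2-random coordinate descent
method with uniform selection among the `N(N−1)/2` unordered block pairs.  With
`ψ_{L}(s;x) = f(x) + ⟨∇f(x), s⟩ + (1/2)‖s‖_L² + h(x+s)`, `Γ_i = (1/N) ∑_j L_{ij}`,
`D i j` the minimizer of the 2-block model over `S_{ij}` and `dN` the minimizer of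
`ψ_{NΓ}(·;x)` over `S = {s : aᵀs = 0}`, the average of `ψ_{L_{ij}·1}(D i j; x)` over all
pairs satisfies
`E[ψ_{L_{ij}1}(d_{ij};x)] ≤ (1 − 2/(N(N−1))) F(x) + (2/(N(N−1))) ψ_{NΓ}(dN; x)`. -/
theorem stmt13 {n N : ℕ} (hN : 2 ≤ N) (blk : Fin n → Fin N)
    (L : Fin N → Fin N → ℝ) (hLpos : ∀ i j, 0 < L i j) (hLsym : ∀ i j, L i j = L j i)
    (f h : En n → ℝ) (g : En n → En n) (hg : ∀ x, HasGradientAt f (g x) x)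
    (hlip : ∀ (i j : Fin N), i ≠ j → ∀ (y s : En n),
      (∀ l, blk l ≠ i → blk l ≠ j → s l = 0) →
      ‖(blockProj blk i (g (y + s)) + blockProj blk j (g (y + s))) -
        (blockProj blk i (g y) + blockProj blk j (g y))‖ ≤ L i j * ‖s‖)
    (Hc : Fin n → ℝ → ℝ) (hHconv : ∀ l, ConvexOn ℝ Set.univ (Hc l))
    (hsep : ∀ x : En n, h x = ∑ l, Hc l (x l)) (hcont : Continuous h)
    (a : En n) (ha : a ≠ 0) (b : ℝ)
    (x : En n) (hx : ⟪a, x⟫ = b)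
    (Γ : Fin N → ℝ) (hΓ : ∀ i, Γ i = (N : ℝ)⁻¹ * ∑ j, L i j)
    (D : Fin N → Fin N → En n)
    (hDsupp : ∀ i j, i ≠ j → ∀ l, blk l ≠ i → blk l ≠ j → D i j l = 0)
    (hDfeas : ∀ i j, ⟪a, D i j⟫ = 0)
    (hDmin : ∀ (i j : Fin N), i ≠ j → ∀ s : En n,
      (∀ l, blk l ≠ i → blk l ≠ j → s l = 0) → ⟪a, s⟫ = 0 →
      f x + ⟪g x, D i j⟫ + L i j / 2 * ‖D i j‖ ^ 2 + h (x + D i j) ≤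
      f x + ⟪g x, s⟫ + L i j / 2 * ‖s‖ ^ 2 + h (x + s))
    (dN : En n) (hdNfeas : ⟪a, dN⟫ = 0)
    (hdNmin : ∀ s : En n, ⟪a, s⟫ = 0 →
      f x + ⟪g x, dN⟫ + (N : ℝ) / 2 * blockNormSq blk Γ dN + h (x + dN) ≤
      f x + ⟪g x, s⟫ + (N : ℝ) / 2 * blockNormSq blk Γ s + h (x + s)) :
    (2 / ((N : ℝ) * (N - 1))) *
        ∑ p ∈ Finset.univ.filter (fun p : Fin N × Fin N => p.1 < p.2),
          (f x + ⟪g x, D p.1 p.2⟫ + L p.1 p.2 / 2 * ‖D p.1 p.2‖ ^ 2 + h (x + D p.1 p.2)) ≤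
      (1 - 2 / ((N : ℝ) * (N - 1))) * (f x + h x) +
        (2 / ((N : ℝ) * (N - 1))) *
          (f x + ⟪g x, dN⟫ + (N : ℝ) / 2 * blockNormSq blk Γ dN + h (x + dN)) := by
  classical
  set pairs : Finset (Fin N × Fin N) :=
    Finset.univ.filter (fun p : Fin N × Fin N => p.1 < p.2) with hpairs
  obtain ⟨m, e, l1, l2, hinner, hsupp, hsum, hconf⟩ :=
    decomp_s13 a (Finset.univ.filter (fun l => dN l ≠ 0)).card dN le_rfl hdNfeas
  have hP : ∀ t : Fin m, ∃ p : Fin N × Fin N, p.1 < p.2 ∧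
      ∀ l, blk l ≠ p.1 → blk l ≠ p.2 → e t l = 0 := by
    intro t
    rcases lt_trichotomy (blk (l1 t)) (blk (l2 t)) with hij | hij | hij
    · refine ⟨(blk (l1 t), blk (l2 t)), hij, fun l h1 h2 => hsupp t l ?_ ?_⟩
      · rintro rfl; exact h1 rfl
      · rintro rfl; exact h2 rfl
    · by_cases h0 : blk (l1 t) = ⟨0, by omega⟩
      · refine ⟨(⟨0, by omega⟩, ⟨1, by omega⟩), by simp [Fin.lt_def],
          fun l hA hB => hsupp t l ?_ ?_⟩
        · rintro rfl; exact hA h0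
        · rintro rfl; exact hA (hij ▸ h0)
      · refine ⟨(⟨0, by omega⟩, blk (l1 t)), ?_, fun l hA hB => hsupp t l ?_ ?_⟩
        · have hv : (blk (l1 t)).val ≠ 0 := fun hc => h0 (Fin.ext hc)
          simp only [Fin.lt_def]
          omega
        · rintro rfl; exact hB rfl
        · rintro rfl; exact hB hij.symm
    · refine ⟨(blk (l2 t), blk (l1 t)), hij, fun l h1 h2 => hsupp t l ?_ ?_⟩
      · rintro rfl; exact h2 rfl
      · rintro rfl; exact h1 rfl
  choose P hPlt hPsupp using hP
  set s : Fin N × Fin N → En n :=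
    fun p => ∑ t ∈ Finset.univ.filter (fun t => P t = p), e t with hsdef
  have hsapp : ∀ p l, s p l = ∑ t ∈ Finset.univ.filter (fun t => P t = p), e t l := by
    intro p l
    rw [hsdef]
    rw [WithLp.ofLp_sum]; exact Finset.sum_apply l _ _
  have hssupp : ∀ p, ∀ l, blk l ≠ p.1 → blk l ≠ p.2 → s p l = 0 := by
    intro p l h1 h2
    rw [hsapp]
    refine Finset.sum_eq_zero fun t ht => ?_
    rw [Finset.mem_filter] at ht
    exact hPsupp t l (by rw [ht.2]; exact h1) (by rw [ht.2]; exact h2)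
  have hsfeas : ∀ p, ⟪a, s p⟫ = 0 := by
    intro p
    rw [hsdef, inner_sum]
    exact Finset.sum_eq_zero fun t _ => hinner t
  have hssum : ∑ p ∈ pairs, s p = dN := by
    rw [hsdef, hpairs]
    rw [Finset.sum_fiberwise_of_maps_to (fun t _ => by
      simp only [Finset.mem_filter, Finset.mem_univ, true_and]; exact hPlt t)]
    exact hsum
  have hscoord : ∀ l, ∑ p ∈ pairs, s p l = dN l := by
    intro l
    calc ∑ p ∈ pairs, s p l = (∑ p ∈ pairs, s p) l := by rw [WithLp.ofLp_sum, Finset.sum_apply]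
      _ = dN l := by rw [hssum]
  have hsign : ∀ p l, 0 ≤ s p l * dN l := by
    intro p l
    rw [hsapp, Finset.sum_mul]
    exact Finset.sum_nonneg fun t _ => (hconf t l).1
  have hzero : ∀ p l, dN l = 0 → s p l = 0 := by
    intro p l hdl
    rw [hsapp]
    refine Finset.sum_eq_zero fun t _ => ?_
    have h2 := (hconf t l).2
    rw [hdl] at h2
    simpa using abs_nonpos_iff.mp (by simpa using h2)
  have hsign' : ∀ l, ∀ p ∈ pairs, 0 ≤ (dN l - s p l) * dN l := by
    intro l p hp
    have hrw : dN l - s p l = ∑ q ∈ pairs.erase p, s q l := by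
      rw [← hscoord l, ← Finset.add_sum_erase pairs (fun q => s q l) hp]
      ring
    rw [hrw, Finset.sum_mul]
    exact Finset.sum_nonneg fun q _ => hsign q l
  have hsq : ∀ l, ∑ p ∈ pairs, (s p l) ^ 2 ≤ (dN l) ^ 2 := by
    intro l
    rcases eq_or_ne (dN l) 0 with hdl | hdl
    · rw [Finset.sum_congr rfl (fun p _ => by rw [hzero p l hdl]; ring : ∀ p ∈ pairs, (s p l)^2 = 0)]
      simp [hdl]
    · have hc2 : 0 < (dN l) ^ 2 := by positivity
      have hterm : ∀ p ∈ pairs, (s p l) ^ 2 ≤ s p l * dN l := by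
        intro p hp
        have h1 := hsign p l
        have h2 := hsign' l p hp
        nlinarith [mul_nonneg h1 h2]
      calc ∑ p ∈ pairs, (s p l) ^ 2 ≤ ∑ p ∈ pairs, s p l * dN l := Finset.sum_le_sum hterm
        _ = (∑ p ∈ pairs, s p l) * dN l := by rw [Finset.sum_mul]
        _ = (dN l) ^ 2 := by rw [hscoord l]; ring
  -- per-coordinate convexity bound
  have hHl : ∀ l, ∑ p ∈ pairs, Hc l (x l + s p l) ≤
      ((pairs.card : ℝ) - 1) * Hc l (x l) + Hc l (x l + dN l) := by
    intro l
    rcases eq_or_ne (dN l) 0 with hdl | hdl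
    · rw [Finset.sum_congr rfl
        (fun p _ => by rw [hzero p l hdl, add_zero] : ∀ p ∈ pairs, Hc l (x l + s p l) = Hc l (x l))]
      rw [Finset.sum_const, nsmul_eq_mul, hdl, add_zero]
      linarith
    · have hθsum : ∑ p ∈ pairs, s p l / dN l = 1 := by
        rw [← Finset.sum_div, hscoord l, div_self hdl]
      have hbound : ∀ p ∈ pairs, Hc l (x l + s p l) ≤
          (1 - s p l / dN l) * Hc l (x l) + (s p l / dN l) * Hc l (x l + dN l) := by
        intro p hp
        have hθ0 : 0 ≤ s p l / dN l := by
          have heq : s p l / dN l = (s p l * dN l) / (dN l) ^ 2 := by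
            rw [div_eq_div_iff hdl (pow_ne_zero 2 hdl)]; ring
          rw [heq]; exact div_nonneg (hsign p l) (sq_nonneg _)
        have hθ1 : 0 ≤ 1 - s p l / dN l := by
          have heq : 1 - s p l / dN l = ((dN l - s p l) * dN l) / (dN l) ^ 2 := by
            field_simp
          rw [heq]; exact div_nonneg (hsign' l p hp) (sq_nonneg _)
        have hcvx := (hHconv l).2 (Set.mem_univ (x l)) (Set.mem_univ (x l + dN l))
          hθ1 hθ0 (by ring)
        have harg : (1 - s p l / dN l) • (x l) + (s p l / dN l) • (x l + dN l) = x l + s p l := by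
          simp only [smul_eq_mul]
          field_simp
          ring
        rw [harg] at hcvx
        exact hcvx
      calc ∑ p ∈ pairs, Hc l (x l + s p l)
          ≤ ∑ p ∈ pairs, ((1 - s p l / dN l) * Hc l (x l) +
            (s p l / dN l) * Hc l (x l + dN l)) := Finset.sum_le_sum hbound
        _ = ((pairs.card : ℝ) - 1) * Hc l (x l) + Hc l (x l + dN l) := by
            rw [Finset.sum_add_distrib, ← Finset.sum_mul, ← Finset.sum_mul,
              Finset.sum_sub_distrib, Finset.sum_const, hθsum]
            simp only [nsmul_eq_mul, mul_one]
            try ring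
  have hhsum : ∑ p ∈ pairs, h (x + s p) ≤ ((pairs.card : ℝ) - 1) * h x + h (x + dN) := by
    have hrw : ∀ p : Fin N × Fin N, h (x + s p) = ∑ l, Hc l (x l + s p l) := by
      intro p
      rw [hsep]
      refine Finset.sum_congr rfl fun l _ => ?_
      congr 1
      try simp
    calc ∑ p ∈ pairs, h (x + s p) = ∑ p ∈ pairs, ∑ l, Hc l (x l + s p l) :=
          Finset.sum_congr rfl fun p _ => hrw p
      _ = ∑ l, ∑ p ∈ pairs, Hc l (x l + s p l) := Finset.sum_comm
      _ ≤ ∑ l, (((pairs.card : ℝ) - 1) * Hc l (x l) + Hc l (x l + dN l)) :=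
          Finset.sum_le_sum fun l _ => hHl l
      _ = ((pairs.card : ℝ) - 1) * h x + h (x + dN) := by
          rw [Finset.sum_add_distrib, ← Finset.mul_sum, ← hsep x]
          have : ∑ l, Hc l (x l + dN l) = h (x + dN) := by
            rw [hsep (x + dN)]
            refine Finset.sum_congr rfl fun l _ => ?_
            congr 1
            try simp
          rw [this]
  -- norm bound
  have hNne : (N : ℝ) ≠ 0 := by positivity
  have hNG : ∀ i j : Fin N, L i j ≤ (N : ℝ) * Γ i := by
    intro i j
    rw [hΓ i, ← mul_assoc, mul_inv_cancel₀ hNne, one_mul]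
    exact Finset.single_le_sum (fun j' _ => (hLpos i j').le) (Finset.mem_univ j)
  have hΓpos : ∀ i, 0 ≤ Γ i := by
    intro i
    rw [hΓ i]
    exact mul_nonneg (inv_nonneg.mpr (Nat.cast_nonneg N))
      (Finset.sum_nonneg fun j _ => (hLpos i j).le)
  have hnormbound : ∑ p ∈ pairs, L p.1 p.2 / 2 * ‖s p‖ ^ 2 ≤
      (N : ℝ) / 2 * blockNormSq blk Γ dN := by
    calc ∑ p ∈ pairs, L p.1 p.2 / 2 * ‖s p‖ ^ 2
        = ∑ p ∈ pairs, ∑ l, L p.1 p.2 / 2 * (s p l) ^ 2 := by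
          refine Finset.sum_congr rfl fun p _ => ?_
          rw [norm_sq_eq, Finset.mul_sum]
      _ ≤ ∑ p ∈ pairs, ∑ l, (N : ℝ) * Γ (blk l) / 2 * (s p l) ^ 2 := by
          refine Finset.sum_le_sum fun p _ => Finset.sum_le_sum fun l _ => ?_
          rcases eq_or_ne (s p l) 0 with hs | hs
          · rw [hs]; simp
          · have hbl : blk l = p.1 ∨ blk l = p.2 := by
              by_contra hc
              push_neg at hc
              exact hs (hssupp p l hc.1 hc.2)
            have hLb : L p.1 p.2 ≤ (N : ℝ) * Γ (blk l) := by
              rcases hbl with hbl | hbl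
              · rw [hbl]; exact hNG p.1 p.2
              · rw [hbl, hLsym]; exact hNG p.2 p.1
            have h2 : 0 ≤ (s p l) ^ 2 := sq_nonneg _
            nlinarith
      _ = ∑ l, ((N : ℝ) * Γ (blk l) / 2) * ∑ p ∈ pairs, (s p l) ^ 2 := by
          rw [Finset.sum_comm]
          exact Finset.sum_congr rfl fun l _ => by rw [Finset.mul_sum]
      _ ≤ ∑ l, ((N : ℝ) * Γ (blk l) / 2) * (dN l) ^ 2 := by
          refine Finset.sum_le_sum fun l _ => ?_
          apply mul_le_mul_of_nonneg_left (hsq l)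
          have := hΓpos (blk l)
          positivity
      _ = (N : ℝ) / 2 * blockNormSq blk Γ dN := by
          rw [blockNormSq_eq, Finset.mul_sum]
          exact Finset.sum_congr rfl fun l _ => by ring
  have hgrad : ∑ p ∈ pairs, ⟪g x, s p⟫ = ⟪g x, dN⟫ := by
    rw [← inner_sum, hssum]
  have hDle : ∀ p ∈ pairs,
      f x + ⟪g x, D p.1 p.2⟫ + L p.1 p.2 / 2 * ‖D p.1 p.2‖ ^ 2 + h (x + D p.1 p.2) ≤
      f x + ⟪g x, s p⟫ + L p.1 p.2 / 2 * ‖s p‖ ^ 2 + h (x + s p) := by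
    intro p hp
    have hlt : p.1 < p.2 := by
      rw [hpairs, Finset.mem_filter] at hp
      exact hp.2
    exact hDmin p.1 p.2 (ne_of_lt hlt) (s p) (hssupp p) (hsfeas p)
  have key : ∑ p ∈ pairs,
      (f x + ⟪g x, D p.1 p.2⟫ + L p.1 p.2 / 2 * ‖D p.1 p.2‖ ^ 2 + h (x + D p.1 p.2)) ≤
      ((pairs.card : ℝ) - 1) * (f x + h x) +
        (f x + ⟪g x, dN⟫ + (N : ℝ) / 2 * blockNormSq blk Γ dN + h (x + dN)) := by
    have step1 := Finset.sum_le_sum hDle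
    have step2 : ∑ p ∈ pairs, (f x + ⟪g x, s p⟫ + L p.1 p.2 / 2 * ‖s p‖ ^ 2 + h (x + s p)) =
        (pairs.card : ℝ) * f x + ⟪g x, dN⟫ +
          (∑ p ∈ pairs, L p.1 p.2 / 2 * ‖s p‖ ^ 2) + ∑ p ∈ pairs, h (x + s p) := by
      rw [Finset.sum_add_distrib, Finset.sum_add_distrib, Finset.sum_add_distrib,
        Finset.sum_const, nsmul_eq_mul, hgrad]
    rw [step2] at step1
    calc ∑ p ∈ pairs,
        (f x + ⟪g x, D p.1 p.2⟫ + L p.1 p.2 / 2 * ‖D p.1 p.2‖ ^ 2 + h (x + D p.1 p.2)) ≤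
        (pairs.card : ℝ) * f x + ⟪g x, dN⟫ +
          (∑ p ∈ pairs, L p.1 p.2 / 2 * ‖s p‖ ^ 2) + ∑ p ∈ pairs, h (x + s p) := step1
      _ ≤ (pairs.card : ℝ) * f x + ⟪g x, dN⟫ + (N : ℝ) / 2 * blockNormSq blk Γ dN +
          (((pairs.card : ℝ) - 1) * h x + h (x + dN)) := by
          linarith [hnormbound, hhsum]
      _ = ((pairs.card : ℝ) - 1) * (f x + h x) +
          (f x + ⟪g x, dN⟫ + (N : ℝ) / 2 * blockNormSq blk Γ dN + h (x + dN)) := by ring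
  -- cardinality and final arithmetic
  have hMR : (pairs.card : ℝ) = (N : ℝ) * ((N : ℝ) - 1) / 2 := by
    have hnat : pairs.card * 2 + N = N * N := by rw [hpairs]; exact card_lt_pairs N
    have hcast : ((pairs.card : ℝ)) * 2 + (N : ℝ) = (N : ℝ) * (N : ℝ) := by
      exact_mod_cast congrArg (Nat.cast (R := ℝ)) hnat
    linarith [hcast]
  have hNR : (2 : ℝ) ≤ (N : ℝ) := by exact_mod_cast hN
  have hpos : 0 < (N : ℝ) * ((N : ℝ) - 1) := by nlinarith
  have hc0 : (0 : ℝ) ≤ 2 / ((N : ℝ) * ((N : ℝ) - 1)) := by positivity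
  have hc1 : 2 / ((N : ℝ) * ((N : ℝ) - 1)) * (pairs.card : ℝ) = 1 := by
    rw [hMR]
    field_simp
    exact div_self (by linarith)
  calc (2 / ((N : ℝ) * ((N : ℝ) - 1))) * ∑ p ∈ pairs,
      (f x + ⟪g x, D p.1 p.2⟫ + L p.1 p.2 / 2 * ‖D p.1 p.2‖ ^ 2 + h (x + D p.1 p.2)) ≤
      (2 / ((N : ℝ) * ((N : ℝ) - 1))) * (((pairs.card : ℝ) - 1) * (f x + h x) +
        (f x + ⟪g x, dN⟫ + (N : ℝ) / 2 * blockNormSq blk Γ dN + h (x + dN))) :=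
      mul_le_mul_of_nonneg_left key hc0
    _ = (1 - 2 / ((N : ℝ) * ((N : ℝ) - 1))) * (f x + h x) +
        (2 / ((N : ℝ) * ((N : ℝ) - 1))) *
          (f x + ⟪g x, dN⟫ + (N : ℝ) / 2 * blockNormSq blk Γ dN + h (x + dN)) := by
        linear_combination (f x + h x) * hc1
end
end
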